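/- arXiv:2506.20385 — 5 statements merged into one kernel-verified Lean document; each statement's English description precedes it below -/
import Mathlib

section
/- Let X^{(k)} = (X_1^{(k)},…,X_n^{(k)}) be ℝ^n-valued random vectors converging in distribution to X = (X_1,…,X_n) with S = Σ_{i=1}^n X_i. Fix α ∈ (0,1) and assume that for each i ∈ [n] the quantile function of X_i (p ↦ inf{x : P(X_i ≤ x) ≥ p}) is continuous at 1−α, and that the quantile function of S is continuous on (0,1). Set α̃ = sup{β ∈ (0,1) : VaR_β(S) ≥ Σ_{i=1}^n VaR_α(X_i)} (sup ∅ = 0). Then liminf_{k→∞} DQ^{VaR}_α(X^{(k)}) ≥ DQ^{VaR}_α(X) and limsup_{k→∞} DQ^{VaR}_α(X^{(k)}) ≤ α̃/α. If in addition β ↦ VaR_β(S) is strictly decreasing on (0,1), then lim_{k→∞} DQ^{VaR}_α(X^{(k)}) = DQ^{VaR}_α(X). -/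
open MeasureTheory Filter Topology

/-- Value at Risk at level `β`: `VaR_β(Z) = inf {x : P(Z ≤ x) ≥ 1 − β}`. -/
noncomputable def VaR {Ω : Type*} [MeasurableSpace Ω] (P : Measure Ω) (β : ℝ) (Z : Ω → ℝ) : ℝ :=
  sInf {x : ℝ | 1 - β ≤ (P {ω | Z ω ≤ x}).toReal}

/-- The (left-continuous) quantile function `p ↦ inf {x : P(Z ≤ x) ≥ p}`. -/
noncomputable def quantileFn {Ω : Type*} [MeasurableSpace Ω] (P : Measure Ω) (Z : Ω → ℝ)
    (p : ℝ) : ℝ :=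
  sInf {x : ℝ | p ≤ (P {ω | Z ω ≤ x}).toReal}

/-- Diversification quotient based on the VaR class at level `α` (`I = (0,1)`, `inf ∅ = 1`). -/
noncomputable def DQVaR {Ω : Type*} [MeasurableSpace Ω] (P : Measure Ω) (α : ℝ)
    {n : ℕ} (X : Fin n → Ω → ℝ) : ℝ :=
  sInf (insert 1 {β : ℝ | β ∈ Set.Ioo (0:ℝ) 1 ∧
      VaR P β (fun ω => ∑ i, X i ω) ≤ ∑ i, VaR P α (X i)}) / α

set_option linter.unusedSectionVars false


section helpers
variable {Ω : Type*} [MeasurableSpace Ω] (P : Measure Ω) [IsProbabilityMeasure P]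

lemma F_mono (Z : Ω → ℝ) : Monotone (fun x => (P {ω | Z ω ≤ x}).toReal) := by
  intro a b hab
  exact ENNReal.toReal_mono (measure_ne_top P _)
    (measure_mono (fun ω hω => le_trans hω hab))

lemma exists_F_ge (Z : Ω → ℝ) {p : ℝ} (hp : p < 1) :
    ∃ x : ℝ, p ≤ (P {ω | Z ω ≤ x}).toReal := by
  have hmono : Monotone (fun m : ℕ => {ω | Z ω ≤ (m : ℝ)}) := by
    intro a b hab ω hω
    simp only [Set.mem_setOf_eq] at *
    exact le_trans hω (by exact_mod_cast hab)
  have hU : (⋃ m : ℕ, {ω | Z ω ≤ (m : ℝ)}) = Set.univ := by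
    ext ω; simp only [Set.mem_iUnion, Set.mem_univ, iff_true, Set.mem_setOf_eq]
    exact exists_nat_ge (Z ω)
  have h1 : Tendsto (fun m : ℕ => P {ω | Z ω ≤ (m : ℝ)}) atTop (𝓝 1) := by
    have := tendsto_measure_iUnion_atTop (μ := P) hmono
    rwa [hU, measure_univ] at this
  have h2 : Tendsto (fun m : ℕ => (P {ω | Z ω ≤ (m : ℝ)}).toReal) atTop (𝓝 1) := by
    have := (ENNReal.tendsto_toReal (by norm_num)).comp h1
    exact this
  have := (h2.eventually_const_lt hp)
  rcases this.exists with ⟨m, hm⟩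
  exact ⟨m, le_of_lt hm⟩

lemma exists_F_lt (Z : Ω → ℝ) (hZ : Measurable Z) {p : ℝ} (hp : 0 < p) :
    ∃ x : ℝ, (P {ω | Z ω ≤ x}).toReal < p := by
  have hanti : Antitone (fun m : ℕ => {ω | Z ω ≤ -(m : ℝ)}) := by
    intro a b hab ω hω
    simp only [Set.mem_setOf_eq] at *
    have : (a:ℝ) ≤ (b:ℝ) := by exact_mod_cast hab
    linarith
  have hI : (⋂ m : ℕ, {ω | Z ω ≤ -(m : ℝ)}) = ∅ := by
    ext ω; simp only [Set.mem_iInter, Set.mem_empty_iff_false, iff_false, Set.mem_setOf_eq, not_forall]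
    rcases exists_nat_ge (-Z ω + 1) with ⟨m, hm⟩
    exact ⟨m, by push_neg; linarith⟩
  have h1 : Tendsto (fun m : ℕ => P {ω | Z ω ≤ -(m : ℝ)}) atTop (𝓝 0) := by
    have := tendsto_measure_iInter_atTop (μ := P) (s := fun m : ℕ => {ω | Z ω ≤ -(m:ℝ)})
      (fun m => (hZ measurableSet_Iic).nullMeasurableSet) hanti ⟨0, measure_ne_top P _⟩
    rw [hI, measure_empty] at this
    exact this
  have h2 : Tendsto (fun m : ℕ => (P {ω | Z ω ≤ -(m : ℝ)}).toReal) atTop (𝓝 0) := by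
    have := (ENNReal.tendsto_toReal (by norm_num)).comp h1
    exact this
  rcases (h2.eventually_lt_const hp).exists with ⟨m, hm⟩
  exact ⟨-m, hm⟩

lemma qset_nonempty (Z : Ω → ℝ) {p : ℝ} (hp : p < 1) :
    {x : ℝ | p ≤ (P {ω | Z ω ≤ x}).toReal}.Nonempty := exists_F_ge P Z hp

lemma qset_bddBelow (Z : Ω → ℝ) (hZ : Measurable Z) {p : ℝ} (hp : 0 < p) :
    BddBelow {x : ℝ | p ≤ (P {ω | Z ω ≤ x}).toReal} := by
  rcases exists_F_lt P Z hZ hp with ⟨x0, hx0⟩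
  refine ⟨x0, fun y hy => ?_⟩
  by_contra h
  push_neg at h
  exact absurd (le_trans hy (F_mono P Z h.le)) (not_le.2 hx0)

/-- If `y > quantileFn p` then `F y ≥ p` (for `p < 1`). -/
lemma F_ge_of_quantile_lt (Z : Ω → ℝ) {p y : ℝ} (hp : p < 1)
    (hy : quantileFn P Z p < y) : p ≤ (P {ω | Z ω ≤ y}).toReal := by
  obtain ⟨z, hz, hzy⟩ := exists_lt_of_csInf_lt (qset_nonempty P Z hp) hy
  exact le_trans hz (F_mono P Z hzy.le)

end helpers

/-- A continuous ramp: equals 1 on `(-∞, x]`, 0 on `[x+δ, ∞)`. -/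
noncomputable def ramp (x δ : ℝ) : BoundedContinuousFunction ℝ ℝ :=
  BoundedContinuousFunction.mkOfBound
    ⟨fun t => max 0 (min 1 ((x + δ - t) / δ)), by
      apply Continuous.max continuous_const
      apply Continuous.min continuous_const
      exact (continuous_const.sub continuous_id).div_const δ⟩ 1
    (by
      intro a b
      have h1 : ∀ t : ℝ, 0 ≤ max 0 (min 1 ((x + δ - t) / δ)) := fun t => le_max_left _ _
      have h2 : ∀ t : ℝ, max 0 (min 1 ((x + δ - t) / δ)) ≤ 1 := fun t =>
        max_le zero_le_one (min_le_left _ _)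
      rw [Real.dist_eq, abs_sub_le_iff]
      constructor <;> simp only [ContinuousMap.coe_mk] <;>
        [linarith [h1 b, h2 a]; linarith [h1 a, h2 b]])

lemma ramp_nonneg (x δ t : ℝ) : 0 ≤ ramp x δ t := le_max_left _ _

lemma ramp_le_one (x δ t : ℝ) : ramp x δ t ≤ 1 := max_le zero_le_one (min_le_left _ _)

lemma ramp_eq_one {x δ t : ℝ} (hδ : 0 < δ) (ht : t ≤ x) : ramp x δ t = 1 := by
  have h : (1:ℝ) ≤ (x + δ - t) / δ := (le_div_iff₀ hδ).2 (by linarith)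
  show max 0 (min 1 ((x + δ - t) / δ)) = 1
  rw [min_eq_left h, max_eq_right zero_le_one]

lemma ramp_eq_zero {x δ t : ℝ} (hδ : 0 < δ) (ht : x + δ ≤ t) : ramp x δ t = 0 := by
  have h : (x + δ - t) / δ ≤ 0 := div_nonpos_of_nonpos_of_nonneg (by linarith) hδ.le
  show max 0 (min 1 ((x + δ - t) / δ)) = 0
  rw [max_eq_left (le_trans (min_le_right _ _) h)]

section integral
variable {Ω : Type*} [MeasurableSpace Ω] (P : Measure Ω) [IsProbabilityMeasure P]

lemma integrable_comp_ramp (x δ : ℝ) {W : Ω → ℝ} (hW : Measurable W) :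
    Integrable (fun ω => ramp x δ (W ω)) P := by
  refine (integrable_const (1:ℝ)).mono' ?_ ?_
  · exact ((ramp x δ).continuous.measurable.comp hW).aestronglyMeasurable
  · filter_upwards with ω
    rw [Real.norm_eq_abs, abs_of_nonneg (ramp_nonneg _ _ _)]
    exact ramp_le_one _ _ _

lemma F_eq_integral_indicator {W : Ω → ℝ} (hW : Measurable W) (x : ℝ) :
    (P {ω | W ω ≤ x}).toReal = ∫ ω, Set.indicator {ω | W ω ≤ x} (fun _ => (1:ℝ)) ω ∂P := by
  have hset : {ω | W ω ≤ x} = W ⁻¹' Set.Iic x := rfl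
  rw [hset, integral_indicator_const (1:ℝ) (hW measurableSet_Iic)]
  simp
  rfl

lemma F_le_integral_ramp {W : Ω → ℝ} (hW : Measurable W) {x δ : ℝ} (hδ : 0 < δ) :
    (P {ω | W ω ≤ x}).toReal ≤ ∫ ω, ramp x δ (W ω) ∂P := by
  rw [F_eq_integral_indicator P hW x]
  refine integral_mono ((integrable_const (1:ℝ)).indicator (hW measurableSet_Iic))
    (integrable_comp_ramp P x δ hW) (fun ω => ?_)
  by_cases h : W ω ≤ x
  · rw [Set.indicator_of_mem (by exact h : ω ∈ {ω | W ω ≤ x}), ramp_eq_one hδ h]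
  · rw [Set.indicator_of_notMem (by exact h : ω ∉ {ω | W ω ≤ x})]
    exact ramp_nonneg _ _ _

lemma integral_ramp_le_F {W : Ω → ℝ} (hW : Measurable W) {x δ : ℝ} (hδ : 0 < δ) :
    ∫ ω, ramp x δ (W ω) ∂P ≤ (P {ω | W ω ≤ x + δ}).toReal := by
  rw [F_eq_integral_indicator P hW (x + δ)]
  refine integral_mono (integrable_comp_ramp P x δ hW)
    ((integrable_const (1:ℝ)).indicator (hW measurableSet_Iic)) (fun ω => ?_)
  by_cases h : W ω ≤ x + δ
  · rw [Set.indicator_of_mem (by exact h : ω ∈ {ω | W ω ≤ x + δ})]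
    exact ramp_le_one _ _ _
  · rw [Set.indicator_of_notMem (by exact h : ω ∉ {ω | W ω ≤ x + δ}),
      ramp_eq_zero hδ (not_le.1 h).le]

end integral

section qconv
variable {Ω : Type*} [MeasurableSpace Ω] (P : Measure Ω) [IsProbabilityMeasure P]

/-- Weak convergence + continuity of the quantile function at `p` implies quantile convergence. -/
lemma quantile_tendsto {Zk : ℕ → Ω → ℝ} {Z : Ω → ℝ}
    (hZk : ∀ k, Measurable (Zk k)) (hZ : Measurable Z)
    (hw : ∀ φ : BoundedContinuousFunction ℝ ℝ,
      Tendsto (fun k => ∫ ω, φ (Zk k ω) ∂P) atTop (𝓝 (∫ ω, φ (Z ω) ∂P)))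
    {p : ℝ} (hp : p ∈ Set.Ioo (0:ℝ) 1) (hq : ContinuousAt (quantileFn P Z) p) :
    Tendsto (fun k => quantileFn P (Zk k) p) atTop (𝓝 (quantileFn P Z p)) := by
  obtain ⟨hp0, hp1⟩ := hp
  rw [Metric.tendsto_atTop]
  intro ε hε
  set Q := quantileFn P Z p with hQ
  -- upper bound: eventually Q_k p ≤ Q + ε/2
  have hupper : ∀ᶠ k in atTop, quantileFn P (Zk k) p ≤ Q + ε / 2 := by
    -- choose p' ∈ (p,1) with quantileFn P Z p' < Q + ε/8
    obtain ⟨η, hη, hηball⟩ := Metric.continuousAt_iff.1 hq (ε/8) (by linarith)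
    set p' := p + min (η/2) ((1-p)/2) with hp'
    have hminpos : 0 < min (η/2) ((1-p)/2) := lt_min (by linarith) (by linarith)
    have hp'p : p < p' := by simp [hp', hminpos]
    have hp'1 : p' < 1 := by
      have : min (η/2) ((1-p)/2) ≤ (1-p)/2 := min_le_right _ _
      simp only [hp']; linarith
    have hQp' : quantileFn P Z p' < Q + ε/8 := by
      have hd : dist p' p < η := by
        rw [Real.dist_eq, abs_of_nonneg (by linarith)]
        have : min (η/2) ((1-p)/2) ≤ η/2 := min_le_left _ _
        simp only [hp']; linarith
      have := hηball hd
      rw [Real.dist_eq, abs_lt] at this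
      linarith [this.2]
    -- F (Q + ε/4) ≥ p'
    have hF : p' ≤ (P {ω | Z ω ≤ Q + ε/4}).toReal := by
      refine F_ge_of_quantile_lt P Z hp'1 ?_
      linarith
    -- liminf F_k (Q + ε/2) ≥ p' > p
    have hbound := hw (ramp (Q + ε/4) (ε/4))
    have hlim_ge : p' ≤ ∫ ω, ramp (Q + ε/4) (ε/4) (Z ω) ∂P :=
      le_trans hF (F_le_integral_ramp P hZ (by linarith))
    have hev : ∀ᶠ k in atTop, p < ∫ ω, ramp (Q + ε/4) (ε/4) (Zk k ω) ∂P :=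
      hbound.eventually_const_lt (lt_of_lt_of_le hp'p hlim_ge)
    filter_upwards [hev] with k hk
    have hFk : p ≤ (P {ω | Zk k ω ≤ Q + ε/2}).toReal := by
      have := integral_ramp_le_F P (hZk k) (x := Q + ε/4) (δ := ε/4) (by linarith)
      have h24 : Q + ε/4 + ε/4 = Q + ε/2 := by ring
      rw [h24] at this
      linarith
    exact csInf_le (qset_bddBelow P (Zk k) (hZk k) hp0) hFk
  -- lower bound: eventually Q_k p ≥ Q - ε/2
  have hlower : ∀ᶠ k in atTop, Q - ε / 2 ≤ quantileFn P (Zk k) p := by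
    -- F (Q - ε/4) < p
    have hF : (P {ω | Z ω ≤ Q - ε/4}).toReal < p := by
      by_contra h
      push_neg at h
      have : Q ≤ Q - ε/4 := csInf_le (qset_bddBelow P Z hZ hp0) h
      linarith
    have hbound := hw (ramp (Q - ε/2) (ε/4))
    have hlim_le : ∫ ω, ramp (Q - ε/2) (ε/4) (Z ω) ∂P < p := by
      have := integral_ramp_le_F P hZ (x := Q - ε/2) (δ := ε/4) (by linarith)
      have h24 : Q - ε/2 + ε/4 = Q - ε/4 := by ring
      rw [h24] at this
      linarith
    have hev : ∀ᶠ k in atTop, (∫ ω, ramp (Q - ε/2) (ε/4) (Zk k ω) ∂P) < p :=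
      hbound.eventually_lt_const hlim_le
    filter_upwards [hev] with k hk
    have hFk : (P {ω | Zk k ω ≤ Q - ε/2}).toReal < p :=
      lt_of_le_of_lt (F_le_integral_ramp P (hZk k) (by linarith)) hk
    refine le_csInf (qset_nonempty P (Zk k) hp1) (fun y hy => ?_)
    by_contra h
    push_neg at h
    exact absurd (le_trans hy (F_mono P (Zk k) h.le)) (not_le.2 hFk)
  have := hupper.and hlower
  rw [eventually_atTop] at this
  obtain ⟨N, hN⟩ := this
  refine ⟨N, fun k hk => ?_⟩
  obtain ⟨h1, h2⟩ := hN k hk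
  rw [Real.dist_eq, abs_lt]
  constructor <;> linarith

end qconv

section main
variable {Ω : Type*} [MeasurableSpace Ω] (P : Measure Ω) [IsProbabilityMeasure P]

lemma VaR_eq_quantile (β : ℝ) (Z : Ω → ℝ) : VaR P β Z = quantileFn P Z (1 - β) := rfl

lemma VaR_antitoneOn (Z : Ω → ℝ) (hZ : Measurable Z) {β β' : ℝ}
    (hβ : β ∈ Set.Ioo (0:ℝ) 1) (hβ' : β' ∈ Set.Ioo (0:ℝ) 1) (h : β ≤ β') :
    VaR P β' Z ≤ VaR P β Z := by
  refine csInf_le_csInf (qset_bddBelow P Z hZ (by linarith [hβ'.2])) 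
    (qset_nonempty P Z (by linarith [hβ.1])) (fun x hx => ?_)
  exact le_trans (by linarith : (1:ℝ) - β' ≤ 1 - β) hx

theorem DQVaR_convergence_in_distribution'
    {n : ℕ} (Xk : ℕ → Fin n → Ω → ℝ) (X : Fin n → Ω → ℝ)
    (hXkm : ∀ k i, Measurable (Xk k i)) (hXm : ∀ i, Measurable (X i))
    (hconv : ∀ φ : BoundedContinuousFunction (Fin n → ℝ) ℝ,
      Tendsto (fun k => ∫ ω, φ (fun i => Xk k i ω) ∂P) atTop
        (𝓝 (∫ ω, φ (fun i => X i ω) ∂P)))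
    (α : ℝ) (hα : α ∈ Set.Ioo (0:ℝ) 1)
    (hqX : ∀ i, ContinuousAt (quantileFn P (X i)) (1 - α))
    (hqS : ContinuousOn (quantileFn P (fun ω => ∑ i, X i ω)) (Set.Ioo (0:ℝ) 1))
    (αtilde : ℝ)
    (hαtilde : αtilde = sSup {β : ℝ | β ∈ Set.Ioo (0:ℝ) 1 ∧
        (∑ i, VaR P α (X i)) ≤ VaR P β (fun ω => ∑ i, X i ω)}) :
    (DQVaR P α X ≤ atTop.liminf (fun k => DQVaR P α (Xk k))
      ∧ atTop.limsup (fun k => DQVaR P α (Xk k)) ≤ αtilde / α)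
    ∧ (StrictAntiOn (fun β => VaR P β (fun ω => ∑ i, X i ω)) (Set.Ioo (0:ℝ) 1) →
        Tendsto (fun k => DQVaR P α (Xk k)) atTop (𝓝 (DQVaR P α X))) := by
  obtain ⟨hα0, hα1⟩ := hα
  set S : Ω → ℝ := fun ω => ∑ i, X i ω with hS
  set Sk : ℕ → Ω → ℝ := fun k ω => ∑ i, Xk k i ω with hSk
  have hSm : Measurable S := Finset.measurable_sum _ (fun i _ => hXm i)
  have hSkm : ∀ k, Measurable (Sk k) := fun k => Finset.measurable_sum _ (fun i _ => hXkm k i)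
  -- weak convergence of the sum
  have hwS : ∀ φ : BoundedContinuousFunction ℝ ℝ,
      Tendsto (fun k => ∫ ω, φ (Sk k ω) ∂P) atTop (𝓝 (∫ ω, φ (S ω) ∂P)) := by
    intro φ
    have hcont : Continuous (fun v : Fin n → ℝ => ∑ i, v i) :=
      continuous_finset_sum _ (fun i _ => continuous_apply i)
    exact hconv (φ.compContinuous ⟨fun v => ∑ i, v i, hcont⟩)
  -- weak convergence of each coordinate
  have hwX : ∀ i, ∀ φ : BoundedContinuousFunction ℝ ℝ,
      Tendsto (fun k => ∫ ω, φ (Xk k i ω) ∂P) atTop (𝓝 (∫ ω, φ (X i ω) ∂P)) := by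
    intro i φ
    exact hconv (φ.compContinuous ⟨fun v => v i, continuous_apply i⟩)
  -- convergence of the VaR sums
  set c : ℝ := ∑ i, VaR P α (X i) with hc
  set ck : ℕ → ℝ := fun k => ∑ i, VaR P α (Xk k i) with hck
  have hckc : Tendsto ck atTop (𝓝 c) := by
    apply tendsto_finset_sum
    intro i _
    exact quantile_tendsto P (fun k => hXkm k i) (hXm i) (hwX i)
      ⟨by linarith, by linarith⟩ (hqX i)
  -- convergence of VaR of the sums at fixed levels
  have hg : ∀ β ∈ Set.Ioo (0:ℝ) 1,
      Tendsto (fun k => VaR P β (Sk k)) atTop (𝓝 (VaR P β S)) := by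
    intro β hβ
    exact quantile_tendsto P hSkm hSm hwS ⟨by linarith [hβ.2], by linarith [hβ.1]⟩
      (hqS.continuousAt (isOpen_Ioo.mem_nhds ⟨by linarith [hβ.2], by linarith [hβ.1]⟩))
  set A : Set ℝ := {β : ℝ | β ∈ Set.Ioo (0:ℝ) 1 ∧ VaR P β S ≤ c} with hA
  set Ak : ℕ → Set ℝ := fun k => {β : ℝ | β ∈ Set.Ioo (0:ℝ) 1 ∧ VaR P β (Sk k) ≤ ck k} with hAk
  set astar : ℝ := sInf (insert 1 A) with hastar
  set Astar : ℕ → ℝ := fun k => sInf (insert 1 (Ak k)) with hAstar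
  have hDQ : DQVaR P α X = astar / α := rfl
  have hDQk : ∀ k, DQVaR P α (Xk k) = Astar k / α := fun k => rfl
  have hbdd : ∀ (B : Set ℝ), B ⊆ Set.Ioo 0 1 → BddBelow (insert (1:ℝ) B) :=
    fun B hB => ⟨0, fun b hb => by
      rcases hb with rfl | hb
      · norm_num
      · exact (hB hb).1.le⟩
  have hAsub : A ⊆ Set.Ioo 0 1 := fun b hb => hb.1
  have hAksub : ∀ k, Ak k ⊆ Set.Ioo 0 1 := fun k b hb => hb.1
  have hA0 : ∀ k, 0 ≤ Astar k := fun k =>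
    le_csInf ⟨1, Set.mem_insert _ _⟩ (fun b hb => by
      rcases hb with rfl | hb
      · norm_num
      · exact (hAksub k hb).1.le)
  have hA1 : ∀ k, Astar k ≤ 1 := fun k => csInf_le (hbdd _ (hAksub k)) (Set.mem_insert _ _)
  have hastar0 : 0 ≤ astar :=
    le_csInf ⟨1, Set.mem_insert _ _⟩ (fun b hb => by
      rcases hb with rfl | hb
      · norm_num
      · exact (hAsub hb).1.le)
  have hastar1 : astar ≤ 1 := csInf_le (hbdd _ hAsub) (Set.mem_insert _ _)
  -- boundedness of the DQ sequence
  have hub : ∀ k, DQVaR P α (Xk k) ≤ 1 / α := fun k => by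
    rw [hDQk k]; exact (div_le_div_iff_of_pos_right hα0).2 (hA1 k)
  have hlb : ∀ k, 0 ≤ DQVaR P α (Xk k) := fun k => by
    rw [hDQk k]; exact div_nonneg (hA0 k) hα0.le
  have hbdd_le : atTop.IsBoundedUnder (· ≤ ·) (fun k => DQVaR P α (Xk k)) :=
    isBoundedUnder_of ⟨1 / α, hub⟩
  have hbdd_ge : atTop.IsBoundedUnder (· ≥ ·) (fun k => DQVaR P α (Xk k)) :=
    isBoundedUnder_of ⟨0, hlb⟩
  have hcob_le := hbdd_ge.isCoboundedUnder_le
  have hcob_ge := hbdd_le.isCoboundedUnder_ge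
  -- core eventual lower bound
  have core1 : ∀ t : ℝ, t ∈ Set.Ioo (0:ℝ) 1 → t < astar →
      ∀ᶠ k in atTop, t ≤ Astar k := by
    intro t ht htlt
    have hnot : ¬ VaR P t S ≤ c := by
      intro h
      exact absurd (csInf_le (hbdd _ hAsub) (Set.mem_insert_of_mem _ ⟨ht, h⟩))
        (not_le.2 htlt)
    have hclt : c < VaR P t S := not_le.1 hnot
    have hev : ∀ᶠ k in atTop, ck k < VaR P t (Sk k) := hckc.eventually_lt (hg t ht) hclt
    filter_upwards [hev] with k hk
    refine le_csInf ⟨1, Set.mem_insert _ _⟩ (fun b hb => ?_)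
    rcases hb with rfl | hb
    · exact ht.2.le
    · by_contra hcon
      push_neg at hcon
      have := VaR_antitoneOn P (Sk k) (hSkm k) hb.1 ht hcon.le
      exact absurd (le_trans this hb.2) (not_le.2 hk)
  -- G1
  have G1 : DQVaR P α X ≤ atTop.liminf (fun k => DQVaR P α (Xk k)) := by
    rw [hDQ]
    refine le_of_forall_pos_le_add (fun ε hε => ?_)
    by_cases hcase : astar ≤ ε * α
    · have h0 : (0:ℝ) ≤ atTop.liminf (fun k => DQVaR P α (Xk k)) :=
        le_liminf_of_le hcob_ge (Eventually.of_forall hlb)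
      have : astar / α ≤ ε := by
        rw [div_le_iff₀ hα0]; linarith
      linarith
    · push_neg at hcase
      set t'' : ℝ := (astar - ε * α + astar) / 2 with ht''
      have ht''mem : t'' ∈ Set.Ioo (0:ℝ) 1 := by
        constructor
        · have : 0 < ε * α := mul_pos hε hα0
          rw [ht'']; nlinarith
        · rw [ht'']; nlinarith [mul_pos hε hα0]
      have ht''lt : t'' < astar := by
        rw [ht'']; nlinarith [mul_pos hε hα0]
      have hev := core1 t'' ht''mem ht''lt
      have : astar / α - ε ≤ atTop.liminf (fun k => DQVaR P α (Xk k)) := by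
        refine le_liminf_of_le hcob_ge ?_
        filter_upwards [hev] with k hk
        rw [hDQk k]
        have h1 : astar - ε * α ≤ t'' := by rw [ht'']; nlinarith [mul_pos hε hα0]
        have h2 : (astar - ε * α) / α ≤ Astar k / α :=
          (div_le_div_iff_of_pos_right hα0).2 (le_trans h1 hk)
        have h3 : (astar - ε * α) / α = astar / α - ε := by
          field_simp
        linarith
      linarith
  -- facts about αtilde
  set B : Set ℝ := {β : ℝ | β ∈ Set.Ioo (0:ℝ) 1 ∧ c ≤ VaR P β S} with hB
  have hαtilde' : αtilde = sSup B := hαtilde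
  have hBbdd : BddAbove B := ⟨1, fun b hb => hb.1.2.le⟩
  have htilde0 : 0 ≤ αtilde := by
    rw [hαtilde']
    rcases Set.eq_empty_or_nonempty B with he | hne
    · rw [he, Real.sSup_empty]
    · obtain ⟨b, hb⟩ := hne
      exact le_trans hb.1.1.le (le_csSup hBbdd hb)
  -- G2
  have G2 : atTop.limsup (fun k => DQVaR P α (Xk k)) ≤ αtilde / α := by
    refine le_of_forall_pos_le_add (fun ε hε => ?_)
    by_cases hcase : 1 ≤ αtilde + ε * α
    · have h1 : atTop.limsup (fun k => DQVaR P α (Xk k)) ≤ 1 / α :=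
        limsup_le_of_le hcob_le (Eventually.of_forall hub)
      have h2 : 1 / α ≤ αtilde / α + ε := by
        rw [div_add' _ _ _ hα0.ne', div_le_div_iff₀ hα0 hα0]
        nlinarith
      linarith
    · push_neg at hcase
      set t : ℝ := αtilde + ε * α with ht
      have htmem : t ∈ Set.Ioo (0:ℝ) 1 :=
        ⟨by nlinarith [mul_pos hε hα0], hcase⟩
      have hnotB : ¬ c ≤ VaR P t S := by
        intro h
        have : t ≤ αtilde := by
          rw [hαtilde']; exact le_csSup hBbdd ⟨htmem, h⟩
        nlinarith [mul_pos hε hα0]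
      have hlt : VaR P t S < c := not_le.1 hnotB
      have hev : ∀ᶠ k in atTop, VaR P t (Sk k) < ck k := (hg t htmem).eventually_lt hckc hlt
      refine limsup_le_of_le hcob_le ?_
      filter_upwards [hev] with k hk
      rw [hDQk k]
      have hmem : Astar k ≤ t :=
        csInf_le (hbdd _ (hAksub k)) (Set.mem_insert_of_mem _ ⟨htmem, hk.le⟩)
      have : Astar k / α ≤ t / α := (div_le_div_iff_of_pos_right hα0).2 hmem
      have h3 : t / α = αtilde / α + ε := by
        rw [ht]; field_simp
      linarith
  refine ⟨⟨G1, G2⟩, ?_⟩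
  -- strict case
  intro hstrict
  have htle : αtilde ≤ astar := by
    rw [hαtilde']
    rcases Set.eq_empty_or_nonempty B with he | hne
    · rw [he, Real.sSup_empty]; exact hastar0
    · refine csSup_le hne (fun b hb => ?_)
      refine le_csInf ⟨1, Set.mem_insert _ _⟩ (fun a ha => ?_)
      rcases ha with rfl | ha
      · exact hb.1.2.le
      · by_contra hcon
        push_neg at hcon
        have hlt := hstrict ha.1 hb.1 hcon
        simp only at hlt
        have : VaR P b S < VaR P a S := hlt
        have h1 : VaR P a S ≤ c := ha.2
        have h2 : c ≤ VaR P b S := hb.2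
        linarith
  rw [hDQ]
  refine tendsto_of_le_liminf_of_limsup_le ?_ ?_ hbdd_le hbdd_ge
  · rw [hDQ] at G1; exact G1
  · refine le_trans G2 ?_
    exact (div_le_div_iff_of_pos_right hα0).2 htle

end main


/-- continuity (consistency) of `DQ^{VaR}_α` along convergence in distribution:
if `X^{(k)} → X` in distribution, the quantile function of each `X_i` is continuous at `1−α`
and the quantile function of `S` is continuous on `(0,1)`, then
`liminf_k DQ^{VaR}_α(X^{(k)}) ≥ DQ^{VaR}_α(X)` and `limsup_k DQ^{VaR}_α(X^{(k)}) ≤ α̃/α`;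
if moreover `β ↦ VaR_β(S)` is strictly decreasing on `(0,1)`, then
`DQ^{VaR}_α(X^{(k)}) → DQ^{VaR}_α(X)`. -/
theorem DQVaR_convergence_in_distribution
    {Ω : Type*} [MeasurableSpace Ω] (P : Measure Ω) [IsProbabilityMeasure P]
    {n : ℕ} (Xk : ℕ → Fin n → Ω → ℝ) (X : Fin n → Ω → ℝ)
    (hXkm : ∀ k i, Measurable (Xk k i)) (hXm : ∀ i, Measurable (X i))
    -- convergence in distribution of the random vectors `X^{(k)}` to `X`
    (hconv : ∀ φ : BoundedContinuousFunction (Fin n → ℝ) ℝ,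
      Tendsto (fun k => ∫ ω, φ (fun i => Xk k i ω) ∂P) atTop
        (𝓝 (∫ ω, φ (fun i => X i ω) ∂P)))
    (α : ℝ) (hα : α ∈ Set.Ioo (0:ℝ) 1)
    (hqX : ∀ i, ContinuousAt (quantileFn P (X i)) (1 - α))
    (hqS : ContinuousOn (quantileFn P (fun ω => ∑ i, X i ω)) (Set.Ioo (0:ℝ) 1))
    (αtilde : ℝ)
    (hαtilde : αtilde = sSup {β : ℝ | β ∈ Set.Ioo (0:ℝ) 1 ∧
        (∑ i, VaR P α (X i)) ≤ VaR P β (fun ω => ∑ i, X i ω)}) :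
    (DQVaR P α X ≤ atTop.liminf (fun k => DQVaR P α (Xk k))
      ∧ atTop.limsup (fun k => DQVaR P α (Xk k)) ≤ αtilde / α)
    ∧ (StrictAntiOn (fun β => VaR P β (fun ω => ∑ i, X i ω)) (Set.Ioo (0:ℝ) 1) →
        Tendsto (fun k => DQVaR P α (Xk k)) atTop (𝓝 (DQVaR P α X))) :=
  DQVaR_convergence_in_distribution' P Xk X hXkm hXm hconv α hα hqX hqS αtilde hαtilde
end

section
/- Let X^{(1)}, X^{(2)}, … be i.i.d. copies of X = (X_1,…,X_n) with S = Σ_{i=1}^n X_i. Fix α ∈ (0,1) and assume that the quantile function of each X_i is continuous at 1−α and that the quantile function of S is continuous on (0,1). Set α̃ = sup{β ∈ (0,1) : VaR_β(S) ≥ Σ_{i=1}^n VaR_α(X_i)} (sup ∅ = 0). Then almost surely liminf_{N→∞} DQ̂^{VaR}_α(N) ≥ DQ^{VaR}_α(X) and limsup_{N→∞} DQ̂^{VaR}_α(N) ≤ α̃/α. If in addition β ↦ VaR_β(S) is strictly decreasing on (0,1), then DQ̂^{VaR}_α(N) → DQ^{VaR}_α(X) almost surely as N → ∞. -/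
open MeasureTheory ProbabilityTheory Filter Topology
open scoped ENNReal

/-- VaR of a distribution `μ` on `ℝ`. -/
noncomputable def mVaR (μ : Measure ℝ) (β : ℝ) : ℝ :=
  sInf {x : ℝ | 1 - β ≤ (μ (Set.Iic x)).toReal}

/-- `DQ^{VaR}_α` of a joint distribution `ν` on `ℝⁿ`. -/
noncomputable def mDQVaR {n : ℕ} (ν : Measure (Fin n → ℝ)) (α : ℝ) : ℝ :=
  sInf (insert 1 {β : ℝ | β ∈ Set.Ioo (0:ℝ) 1 ∧
      mVaR (ν.map (fun x => ∑ i, x i)) β ≤ ∑ i, mVaR (ν.map (fun x => x i)) α}) / α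

/-- The empirical joint distribution (on `ℝⁿ`) of the first `N` values of `v`. -/
noncomputable def empJoint {n : ℕ} (N : ℕ) (v : ℕ → Fin n → ℝ) : Measure (Fin n → ℝ) :=
  (N : ℝ≥0∞)⁻¹ • ∑ k ∈ Finset.range N, MeasureTheory.Measure.dirac (v k)

/-! ### Auxiliary lemmas -/

/-- Generic "left-continuous inverse" of a CDF-like function. -/
noncomputable def Qf (G : ℝ → ℝ) (p : ℝ) : ℝ := sInf {x : ℝ | p ≤ G x}

lemma Qf_set_bddBelow {G : ℝ → ℝ} {p : ℝ} (hG0 : Tendsto G atBot (𝓝 0)) (hp : 0 < p) :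
    BddBelow {x : ℝ | p ≤ G x} := by
  obtain ⟨b, hb⟩ := eventually_atBot.1 (hG0.eventually (eventually_lt_nhds hp))
  exact ⟨b, fun x hx => le_of_not_gt fun hxb => absurd hx (not_le.2 (hb x hxb.le))⟩

lemma Qf_set_nonempty {G : ℝ → ℝ} {p : ℝ} (hG1 : Tendsto G atTop (𝓝 1)) (hp : p < 1) :
    {x : ℝ | p ≤ G x}.Nonempty := by
  obtain ⟨x, hx⟩ := (hG1.eventually (eventually_ge_nhds hp)).exists
  exact ⟨x, hx⟩

/-- Convergence of generalized inverses at continuity points of the limit inverse,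
given pointwise convergence at rational points. -/
lemma Qf_tendsto {G : ℝ → ℝ} {Gn : ℕ → ℝ → ℝ} {p : ℝ} (hp : p ∈ Set.Ioo (0:ℝ) 1)
    (hGmono : Monotone G) (hG0 : Tendsto G atBot (𝓝 0)) (hG1 : Tendsto G atTop (𝓝 1))
    (hq : ContinuousAt (Qf G) p)
    (hGn : ∀ N, Monotone (Gn N))
    (hbdd : ∀ N, BddBelow {x : ℝ | p ≤ Gn N x})
    (hconv : ∀ r : ℚ, Tendsto (fun N => Gn N (r:ℝ)) atTop (𝓝 (G (r:ℝ)))) :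
    Tendsto (fun N => Qf (Gn N) p) atTop (𝓝 (Qf G p)) := by
  have upper : ∀ c, Qf G p < c → ∀ᶠ N in atTop, ∃ r : ℚ, (r:ℝ) < c ∧ p ≤ Gn N (r:ℝ) := by
    intro c hc
    have h1 : ∀ᶠ p' in 𝓝[>] p, Qf G p' < c :=
      ((hq.tendsto.mono_left nhdsWithin_le_nhds).eventually (eventually_lt_nhds hc))
    have h2 : ∀ᶠ p' in 𝓝[>] p, p' ∈ Set.Ioo p 1 :=
      eventually_mem_set.2 (Ioo_mem_nhdsGT_of_mem ⟨le_refl p, hp.2⟩)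
    obtain ⟨p', hp'c, hp'⟩ := (h1.and h2).exists
    obtain ⟨r, hr1, hr2⟩ := exists_rat_btwn hp'c
    have hGr : p' ≤ G r := by
      obtain ⟨x, hx, hxr⟩ := (csInf_lt_iff (Qf_set_bddBelow hG0 (lt_trans hp.1 hp'.1))
          (Qf_set_nonempty hG1 hp'.2)).1 hr1
      exact le_trans hx (hGmono hxr.le)
    filter_upwards [(hconv r).eventually (eventually_ge_nhds (lt_of_lt_of_le hp'.1 hGr))]
      with N hN
    exact ⟨r, hr2, hN⟩
  rw [tendsto_order]
  constructor
  · intro c hc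
    have h1 : ∀ᶠ p' in 𝓝[<] p, c < Qf G p' :=
      ((hq.tendsto.mono_left nhdsWithin_le_nhds).eventually (eventually_gt_nhds hc))
    have h2 : ∀ᶠ p' in 𝓝[<] p, p' ∈ Set.Ioo 0 p :=
      eventually_mem_set.2 (Ioo_mem_nhdsLT_of_mem ⟨hp.1, le_refl p⟩)
    obtain ⟨p', hp'c, hp'⟩ := (h1.and h2).exists
    obtain ⟨r, hr1, hr2⟩ := exists_rat_btwn hp'c
    have hGr : G r < p' := by
      by_contra h
      have hle : Qf G p' ≤ r := csInf_le (Qf_set_bddBelow hG0 hp'.1) (not_lt.1 h)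
      exact absurd hr2 (not_lt.2 hle)
    have hNE := upper _ (lt_add_one (Qf G p))
    filter_upwards [(hconv r).eventually (eventually_lt_nhds (lt_trans hGr hp'.2)), hNE]
      with N hN hne
    obtain ⟨r', _, hr'⟩ := hne
    have hrle : (r:ℝ) ≤ Qf (Gn N) p := by
      refine le_csInf ⟨r', hr'⟩ fun x hx => ?_
      by_contra hxr
      exact absurd hx (not_le.2 (lt_of_le_of_lt (hGn N (not_le.1 hxr).le) hN))
    exact lt_of_lt_of_le hr1 hrle
  · intro c hc
    filter_upwards [upper c hc] with N hN
    obtain ⟨r, hrc, hr⟩ := hN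
    exact lt_of_le_of_lt (csInf_le (hbdd N) hr) hrc

lemma trueCDF_props {Ω : Type*} [MeasurableSpace Ω] (P : Measure Ω) [IsProbabilityMeasure P]
    {Z : Ω → ℝ} (hZ : Measurable Z) :
    Monotone (fun x => (P {ω | Z ω ≤ x}).toReal) ∧
    Tendsto (fun x => (P {ω | Z ω ≤ x}).toReal) atBot (𝓝 0) ∧
    Tendsto (fun x => (P {ω | Z ω ≤ x}).toReal) atTop (𝓝 1) := by
  have hmap : ∀ x : ℝ, P {ω | Z ω ≤ x} = (P.map Z) (Set.Iic x) := fun x =>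
    (Measure.map_apply hZ measurableSet_Iic).symm
  have hPM : IsProbabilityMeasure (P.map Z) := Measure.isProbabilityMeasure_map hZ.aemeasurable
  refine ⟨?_, ?_, ?_⟩
  · intro a b hab
    exact ENNReal.toReal_mono (measure_ne_top _ _)
      (measure_mono fun ω (h : Z ω ≤ a) => le_trans h hab)
  · have h0 : Tendsto (fun x : ℝ => (P.map Z) (Set.Iic x)) atBot (𝓝 0) := by
      have h := tendsto_measure_iInter_atBot (μ := P.map Z) (s := fun x : ℝ => Set.Iic x)
        (fun x => measurableSet_Iic.nullMeasurableSet)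
        (fun a b hab => Set.Iic_subset_Iic.2 hab) ⟨0, measure_ne_top _ _⟩
      have he : ⋂ x : ℝ, Set.Iic x = (∅ : Set ℝ) := by
        ext y
        simp only [Set.mem_iInter, Set.mem_Iic, Set.mem_empty_iff_false, iff_false, not_forall,
          not_le]
        exact ⟨y - 1, by linarith⟩
      rw [he] at h
      simpa [Function.comp_def] using h
    have h := (ENNReal.tendsto_toReal (by simp)).comp h0
    simp only [Function.comp_def] at h
    simpa [hmap] using h
  · have h1 : Tendsto (fun x : ℝ => (P.map Z) (Set.Iic x)) atTop (𝓝 1) := by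
      simpa using tendsto_measure_Iic_atTop (P.map Z)
    have h := (ENNReal.tendsto_toReal (a := 1) (by simp)).comp h1
    simp only [Function.comp_def] at h
    simpa [hmap] using h

lemma empJoint_cdf {n : ℕ} (N : ℕ) (v : ℕ → Fin n → ℝ) {f : (Fin n → ℝ) → ℝ}
    (hf : Measurable f) (x : ℝ) :
    (((empJoint N v).map f) (Set.Iic x)).toReal
      = (∑ k ∈ Finset.range N, if f (v k) ≤ x then (1:ℝ) else 0) / (N : ℝ) := by
  rw [Measure.map_apply hf measurableSet_Iic]
  rw [empJoint, Measure.smul_apply, Measure.finset_sum_apply]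
  have hterm : ∀ k ∈ Finset.range N,
      Measure.dirac (v k) (f ⁻¹' Set.Iic x) = if f (v k) ≤ x then (1:ℝ≥0∞) else 0 := by
    intro k _
    rw [Measure.dirac_apply' _ (hf measurableSet_Iic)]
    by_cases h : f (v k) ≤ x
    · simp [Set.indicator_apply, h]
    · simp [Set.indicator_apply, h]
  rw [Finset.sum_congr rfl hterm, smul_eq_mul, ENNReal.toReal_mul,
    ENNReal.toReal_sum (fun k _ => by split <;> simp), ENNReal.toReal_inv,
    ENNReal.toReal_natCast, inv_mul_eq_div]
  congr 1
  refine Finset.sum_congr rfl fun k _ => ?_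
  split <;> simp

lemma emp_mono {n : ℕ} (N : ℕ) (v : ℕ → Fin n → ℝ) {f : (Fin n → ℝ) → ℝ}
    (hf : Measurable f) :
    Monotone (fun x => (((empJoint N v).map f) (Set.Iic x)).toReal) := by
  intro a b hab
  simp only [empJoint_cdf N v hf]
  rw [div_eq_mul_inv, div_eq_mul_inv]
  refine mul_le_mul_of_nonneg_right (Finset.sum_le_sum fun k _ => ?_) (by positivity)
  split_ifs with h1 h2
  · exact le_rfl
  · exact absurd (h1.trans hab) h2
  · exact zero_le_one
  · exact le_rfl

lemma emp_tendsto_zero {n : ℕ} (N : ℕ) (v : ℕ → Fin n → ℝ) {f : (Fin n → ℝ) → ℝ}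
    (hf : Measurable f) :
    Tendsto (fun x => (((empJoint N v).map f) (Set.Iic x)).toReal) atBot (𝓝 0) := by
  have h : ∀ᶠ x in atBot, (((empJoint N v).map f) (Set.Iic x)).toReal = 0 := by
    obtain ⟨b, hb⟩ := ((Finset.range N).image fun k => f (v k)).bddBelow
    refine eventually_atBot.2 ⟨b - 1, fun x hx => ?_⟩
    rw [empJoint_cdf N v hf]
    have hz : ∑ k ∈ Finset.range N, (if f (v k) ≤ x then (1:ℝ) else 0) = 0 := by
      refine Finset.sum_eq_zero fun k hk => ?_
      have hbk : b ≤ f (v k) := hb (Finset.mem_coe.2 (Finset.mem_image_of_mem _ hk))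
      exact if_neg (by linarith)
    rw [hz, zero_div]
  refine Filter.Tendsto.congr' ?_ tendsto_const_nhds
  exact h.mono fun x hx => hx.symm

lemma emp_level_nonempty {n : ℕ} {N : ℕ} (v : ℕ → Fin n → ℝ) {f : (Fin n → ℝ) → ℝ}
    (hf : Measurable f) (hN : 1 ≤ N) {c : ℝ} (hc : c ≤ 1) :
    {x : ℝ | c ≤ (((empJoint N v).map f) (Set.Iic x)).toReal}.Nonempty := by
  obtain ⟨b, hb⟩ := ((Finset.range N).image fun k => f (v k)).bddAbove
  refine ⟨b, ?_⟩
  show c ≤ _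
  rw [empJoint_cdf N v hf]
  have hone : ∑ k ∈ Finset.range N, (if f (v k) ≤ b then (1:ℝ) else 0) = (N : ℝ) := by
    rw [Finset.sum_congr rfl
      (fun k hk => if_pos (hb (Finset.mem_coe.2 (Finset.mem_image_of_mem _ hk))))]
    simp
  rw [hone, div_self (Nat.cast_ne_zero.2 (by omega))]
  exact hc

/-- Strong law of large numbers for the empirical CDF at a fixed point. -/
lemma slln_cdf {Ω : Type*} [MeasurableSpace Ω] (P : Measure Ω) [IsProbabilityMeasure P]
    {n : ℕ} (Xs : ℕ → Fin n → Ω → ℝ) (X : Fin n → Ω → ℝ)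
    (hXsm : ∀ k i, Measurable (Xs k i)) (hXm : ∀ i, Measurable (X i))
    (hindep : iIndepFun (m := fun _ : ℕ => (inferInstance : MeasurableSpace (Fin n → ℝ)))
      (fun k => fun ω => fun i => Xs k i ω) P)
    (hident : ∀ k, P.map (fun ω => fun i => Xs k i ω) = P.map (fun ω => fun i => X i ω))
    {f : (Fin n → ℝ) → ℝ} (hf : Measurable f) (x : ℝ) :
    ∀ᵐ ω ∂P, Tendsto (fun N => (((empJoint N (fun k i => Xs k i ω)).map f) (Set.Iic x)).toReal)
      atTop (𝓝 ((P {ω' | f (fun i => X i ω') ≤ x}).toReal)) := by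
  classical
  set s : Set (Fin n → ℝ) := f ⁻¹' Set.Iic x with hs_def
  have hs : MeasurableSet s := hf measurableSet_Iic
  set h : (Fin n → ℝ) → ℝ := s.indicator 1 with hh_def
  have hhm : Measurable h := measurable_one.indicator hs
  have hvm : ∀ k, Measurable (fun ω => fun i => Xs k i ω) :=
    fun k => measurable_pi_lambda _ (fun i => hXsm k i)
  have hXvm : Measurable (fun ω => fun i => X i ω) := measurable_pi_lambda _ (fun i => hXm i)
  set B : ℕ → Ω → ℝ := fun k ω => h (fun i => Xs k i ω) with hB_def
  have hBm : ∀ k, Measurable (B k) := fun k => hhm.comp (hvm k)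
  have hBind : ∀ k, B k = ((fun ω => fun i => Xs k i ω) ⁻¹' s).indicator (fun _ => (1:ℝ)) := by
    intro k
    funext ω
    simp [hB_def, hh_def, Set.indicator_apply, Set.mem_preimage]
  have hint : Integrable (B 0) P := by
    rw [hBind 0]
    exact (integrable_const (1:ℝ)).indicator ((hvm 0) hs)
  have hindep' : Pairwise (Function.onFun (IndepFun · · P) B) := by
    intro i j hij
    exact (hindep.comp (fun _ => h) (fun _ => hhm)).indepFun hij
  have hident' : ∀ k, IdentDistrib (B k) (B 0) P P := by
    intro k
    refine ⟨(hBm k).aemeasurable, (hBm 0).aemeasurable, ?_⟩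
    have e1 : Measure.map (B k) P = (P.map (fun ω => fun i => Xs k i ω)).map h :=
      (Measure.map_map hhm (hvm k)).symm
    have e0 : Measure.map (B 0) P = (P.map (fun ω => fun i => Xs 0 i ω)).map h :=
      (Measure.map_map hhm (hvm 0)).symm
    rw [e1, e0, hident k, hident 0]
  have hmean : ∫ ω, B 0 ω ∂P = (P {ω' | f (fun i => X i ω') ≤ x}).toReal := by
    have h1 : ∫ ω, B 0 ω ∂P = (P ((fun ω => fun i => Xs 0 i ω) ⁻¹' s)).toReal := by
      rw [hBind 0]
      exact integral_indicator_one ((hvm 0) hs)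
    rw [h1, ← Measure.map_apply (hvm 0) hs, hident 0, Measure.map_apply hXvm hs]
    rfl
  have hsl := strong_law_ae_real B hint hindep' hident'
  rw [hmean] at hsl
  filter_upwards [hsl] with ω hω
  have heq : (fun N => (((empJoint N (fun k i => Xs k i ω)).map f) (Set.Iic x)).toReal)
      = fun N => (∑ k ∈ Finset.range N, B k ω) / (N : ℝ) := by
    have hBval : ∀ k, B k ω = if f (fun i => Xs k i ω) ≤ x then (1:ℝ) else 0 := fun k => by
      simp [hB_def, hh_def, Set.indicator_apply, hs_def, Set.mem_preimage]
    funext N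
    simp only [empJoint_cdf _ _ hf x, hBval]
  rw [heq]
  exact hω

/-- Deterministic core of the consistency proof. -/
lemma det_main {n : ℕ} (v : ℕ → Fin n → ℝ) (α : ℝ) (hα0 : 0 < α) (hα1 : α < 1)
    (FS : ℝ → ℝ) (FI : Fin n → ℝ → ℝ)
    (hFSmono : Monotone FS) (hFS0 : Tendsto FS atBot (𝓝 0)) (hFS1 : Tendsto FS atTop (𝓝 1))
    (hFImono : ∀ i, Monotone (FI i)) (hFI0 : ∀ i, Tendsto (FI i) atBot (𝓝 0))
    (hFI1 : ∀ i, Tendsto (FI i) atTop (𝓝 1))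
    (hqS : ∀ p ∈ Set.Ioo (0:ℝ) 1, ContinuousAt (Qf FS) p)
    (hqI : ∀ i, ContinuousAt (Qf (FI i)) (1 - α))
    (hconvS : ∀ r : ℚ, Tendsto
      (fun N => (((empJoint N v).map (fun y => ∑ j, y j)) (Set.Iic (r:ℝ))).toReal)
      atTop (𝓝 (FS (r:ℝ))))
    (hconvI : ∀ i, ∀ r : ℚ, Tendsto
      (fun N => (((empJoint N v).map (fun y => y i)) (Set.Iic (r:ℝ))).toReal)
      atTop (𝓝 (FI i (r:ℝ))))
    (astar atil : ℝ)
    (hastar : astar = sInf (insert 1 {β : ℝ | β ∈ Set.Ioo (0:ℝ) 1 ∧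
        Qf FS (1-β) ≤ ∑ i, Qf (FI i) (1-α)}))
    (hatil : atil = sSup {β : ℝ | β ∈ Set.Ioo (0:ℝ) 1 ∧
        (∑ i, Qf (FI i) (1-α)) ≤ Qf FS (1-β)}) :
    astar / α ≤ atTop.liminf (fun N => mDQVaR (empJoint N v) α)
    ∧ atTop.limsup (fun N => mDQVaR (empJoint N v) α) ≤ atil / α
    ∧ (astar = atil → Tendsto (fun N => mDQVaR (empJoint N v) α) atTop (𝓝 (astar / α))) := by
  classical
  have hsumm : Measurable (fun y : Fin n → ℝ => ∑ j, y j) :=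
    Finset.measurable_sum _ (fun j _ => measurable_pi_apply j)
  have hevalm : ∀ i : Fin n, Measurable (fun y : Fin n → ℝ => y i) :=
    fun i => measurable_pi_apply i
  -- empirical CDFs
  set FeS : ℕ → ℝ → ℝ :=
    fun N x => (((empJoint N v).map (fun y => ∑ j, y j)) (Set.Iic x)).toReal with hFeS_def
  set FeI : Fin n → ℕ → ℝ → ℝ :=
    fun i N x => (((empJoint N v).map (fun y => y i)) (Set.Iic x)).toReal with hFeI_def
  -- empirical statistics
  set Ah : ℕ → ℝ := fun N => ∑ i, Qf (FeI i N) (1 - α) with hAh_def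
  set gh : ℕ → ℝ → ℝ := fun N β => Qf (FeS N) (1 - β) with hgh_def
  set ah : ℕ → ℝ :=
    fun N => sInf (insert 1 {β : ℝ | β ∈ Set.Ioo (0:ℝ) 1 ∧ gh N β ≤ Ah N}) with hah_def
  have hmDQ : ∀ N, mDQVaR (empJoint N v) α = ah N / α := fun N => rfl
  -- true statistics
  set AS : ℝ := ∑ i, Qf (FI i) (1 - α) with hAS_def
  set gS : ℝ → ℝ := fun β => Qf FS (1 - β) with hgS_def
  -- basic bounds
  have hinsge : ∀ N, ∀ x ∈ insert 1 {β : ℝ | β ∈ Set.Ioo (0:ℝ) 1 ∧ gh N β ≤ Ah N},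
      (0:ℝ) ≤ x := by
    intro N x hx
    rcases Set.mem_insert_iff.1 hx with h | h
    · rw [h]; exact zero_le_one
    · exact h.1.1.le
  have hah_nonneg : ∀ N, 0 ≤ ah N := fun N => Real.sInf_nonneg (hinsge N)
  have hah_le_one : ∀ N, ah N ≤ 1 :=
    fun N => csInf_le ⟨0, hinsge N⟩ (Set.mem_insert _ _)
  have hastar_ge : ∀ x ∈ insert 1 {β : ℝ | β ∈ Set.Ioo (0:ℝ) 1 ∧ gS β ≤ AS}, (0:ℝ) ≤ x := by
    intro x hx
    rcases Set.mem_insert_iff.1 hx with h | h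
    · rw [h]; exact zero_le_one
    · exact h.1.1.le
  have hastar_nonneg : 0 ≤ astar := hastar ▸ Real.sInf_nonneg hastar_ge
  have hastar_le_one : astar ≤ 1 := by
    rw [hastar]; exact csInf_le ⟨0, hastar_ge⟩ (Set.mem_insert _ _)
  have hatil_nonneg : 0 ≤ atil := hatil ▸ Real.sSup_nonneg (fun x hx => hx.1.1.le)
  have hatil_le_one : atil ≤ 1 := hatil ▸ Real.sSup_le (fun x hx => hx.1.2.le) zero_le_one
  -- convergence of empirical statistics
  have hAconv : Tendsto Ah atTop (𝓝 AS) := by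
    rw [hAh_def, hAS_def]
    refine tendsto_finset_sum _ (fun i _ => ?_)
    exact Qf_tendsto ⟨by linarith, by linarith⟩ (hFImono i) (hFI0 i) (hFI1 i) (hqI i)
      (fun N => emp_mono N v (hevalm i)) (fun N => Qf_set_bddBelow
        (emp_tendsto_zero N v (hevalm i)) (by linarith)) (hconvI i)
  have hgconv : ∀ β : ℝ, 0 < β → β < 1 → Tendsto (fun N => gh N β) atTop (𝓝 (gS β)) := by
    intro β hβ0 hβ1
    exact Qf_tendsto ⟨by linarith, by linarith⟩ hFSmono hFS0 hFS1
      (hqS (1-β) ⟨by linarith, by linarith⟩)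
      (fun N => emp_mono N v hsumm)
      (fun N => Qf_set_bddBelow (emp_tendsto_zero N v hsumm) (by linarith)) hconvS
  -- empirical quantile of the sum is antitone in the level
  have hgh_anti : ∀ N, 1 ≤ N → ∀ b β : ℝ, 0 < b → b ≤ β → β < 1 → gh N β ≤ gh N b := by
    intro N hN b β hb0 hbβ hβ1
    refine csInf_le_csInf (Qf_set_bddBelow (emp_tendsto_zero N v hsumm) (by linarith))
      (emp_level_nonempty v hsumm hN (by linarith)) (fun x hx => ?_)
    exact le_trans (by linarith : (1:ℝ) - β ≤ 1 - b) hx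
  -- eventual lower bound
  have L1 : ∀ c : ℝ, c < astar →
      ∀ᶠ N in atTop, c < ah N := by
    intro c hc
    rcases lt_or_ge c 0 with h0 | h0
    · exact Eventually.of_forall fun N => lt_of_lt_of_le h0 (hah_nonneg N)
    · obtain ⟨β, hcβ, hβa⟩ := exists_between hc
      have hβ0 : 0 < β := lt_of_le_of_lt h0 hcβ
      have hβ1 : β < 1 := lt_of_lt_of_le hβa hastar_le_one
      have hAg : AS < gS β := by
        by_contra hle
        have hmem : β ∈ insert 1 {β : ℝ | β ∈ Set.Ioo (0:ℝ) 1 ∧ gS β ≤ AS} :=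
          Set.mem_insert_of_mem _ ⟨⟨hβ0, hβ1⟩, not_lt.1 hle⟩
        have hle2 : astar ≤ β := hastar ▸ csInf_le ⟨0, hastar_ge⟩ hmem
        linarith
      filter_upwards [hAconv.eventually_lt (hgconv β hβ0 hβ1) hAg, eventually_ge_atTop 1]
        with N hN hN1
      have hble : β ≤ ah N := by
        refine le_csInf ⟨1, Set.mem_insert _ _⟩ fun b hb => ?_
        rcases Set.mem_insert_iff.1 hb with rfl | ⟨⟨hb0, hb1⟩, hgle⟩
        · exact hβ1.le
        · by_contra hlt
          have hgg : gh N β ≤ gh N b := hgh_anti N hN1 b β hb0 (not_le.1 hlt).le hβ1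
          linarith
      exact lt_of_lt_of_le hcβ hble
  -- eventual upper bound
  have L2 : ∀ c : ℝ, atil < c → c < 1 → ∀ᶠ N in atTop, ah N ≤ c := by
    intro c hc hc1
    have hc0 : 0 < c := lt_of_le_of_lt hatil_nonneg hc
    have hgc : gS c < AS := by
      by_contra hle
      have hmem : c ∈ {β : ℝ | β ∈ Set.Ioo (0:ℝ) 1 ∧ AS ≤ gS β} :=
        ⟨⟨hc0, hc1⟩, not_lt.1 hle⟩
      have hle2 : c ≤ atil := hatil ▸ le_csSup ⟨1, fun x hx => hx.1.2.le⟩ hmem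
      linarith
    filter_upwards [(hgconv c hc0 hc1).eventually_lt hAconv hgc] with N hN
    exact csInf_le ⟨0, hinsge N⟩ (Set.mem_insert_of_mem _ ⟨⟨hc0, hc1⟩, hN.le⟩)
  -- boundedness
  have hbddle : IsBoundedUnder (· ≤ ·) atTop (fun N => mDQVaR (empJoint N v) α) :=
    isBoundedUnder_of ⟨1 / α, fun N => by
      rw [hmDQ]; exact (div_le_div_iff_of_pos_right hα0).2 (hah_le_one N)⟩
  have hbddge : IsBoundedUnder (· ≥ ·) atTop (fun N => mDQVaR (empJoint N v) α) :=
    isBoundedUnder_of ⟨0, fun N => by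
      rw [hmDQ]; exact div_nonneg (hah_nonneg N) hα0.le⟩
  have G1 : astar / α ≤ atTop.liminf (fun N => mDQVaR (empJoint N v) α) := by
    refine le_of_forall_lt fun c hc => ?_
    obtain ⟨c', hcc', hc'⟩ := exists_between hc
    have h1 : c' * α < astar := (lt_div_iff₀ hα0).1 hc'
    have h3 : c' ≤ atTop.liminf (fun N => mDQVaR (empJoint N v) α) := by
      refine le_liminf_of_le hbddle.isCoboundedUnder_ge ?_
      filter_upwards [L1 _ h1] with N hN
      rw [hmDQ]
      exact (le_div_iff₀ hα0).2 hN.le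
    exact lt_of_lt_of_le hcc' h3
  have G2 : atTop.limsup (fun N => mDQVaR (empJoint N v) α) ≤ atil / α := by
    rcases le_or_gt 1 atil with h1 | h1
    · refine limsup_le_of_le hbddge.isCoboundedUnder_le (Eventually.of_forall fun N => ?_)
      rw [hmDQ]
      exact (div_le_div_iff_of_pos_right hα0).2 ((hah_le_one N).trans h1)
    · refine le_of_forall_pos_le_add fun ε hε => ?_
      set c := min (atil + ε * α) ((atil + 1) / 2) with hc_def
      have hc1 : atil < c := lt_min (by nlinarith) (by linarith)
      have hc2 : c < 1 := lt_of_le_of_lt (min_le_right _ _) (by linarith)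
      have h3 : atTop.limsup (fun N => mDQVaR (empJoint N v) α) ≤ c / α := by
        refine limsup_le_of_le hbddge.isCoboundedUnder_le ?_
        filter_upwards [L2 c hc1 hc2] with N hN
        rw [hmDQ]
        exact (div_le_div_iff_of_pos_right hα0).2 hN
      have h4 : c / α ≤ atil / α + ε := by
        have hcle : c ≤ atil + ε * α := min_le_left _ _
        calc c / α ≤ (atil + ε * α) / α := (div_le_div_iff_of_pos_right hα0).2 hcle
          _ = atil / α + ε := by rw [add_div, mul_div_cancel_right₀ ε hα0.ne']
      exact h3.trans h4
  refine ⟨G1, G2, fun heq => ?_⟩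
  exact tendsto_of_le_liminf_of_limsup_le G1 (by rw [heq]; exact G2) hbddle hbddge

/-- strong consistency of the empirical estimator of `DQ^{VaR}_α`
based on i.i.d. samples, where the estimator is `DQ^{VaR}_α` evaluated at the
empirical joint distribution. -/
theorem DQVaR_empirical_consistency
    {Ω : Type*} [MeasurableSpace Ω] (P : Measure Ω) [IsProbabilityMeasure P]
    {n : ℕ} (Xs : ℕ → Fin n → Ω → ℝ) (X : Fin n → Ω → ℝ)
    (hXsm : ∀ k i, Measurable (Xs k i)) (hXm : ∀ i, Measurable (X i))
    -- the samples `X^{(k)}` are i.i.d. copies of `X`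
    (hindep : iIndepFun (m := fun _ : ℕ => (inferInstance : MeasurableSpace (Fin n → ℝ)))
      (fun k => fun ω => fun i => Xs k i ω) P)
    (hident : ∀ k, P.map (fun ω => fun i => Xs k i ω) = P.map (fun ω => fun i => X i ω))
    (α : ℝ) (hα : α ∈ Set.Ioo (0:ℝ) 1)
    (hqX : ∀ i, ContinuousAt (quantileFn P (X i)) (1 - α))
    (hqS : ContinuousOn (quantileFn P (fun ω => ∑ i, X i ω)) (Set.Ioo (0:ℝ) 1))
    (αtilde : ℝ)
    (hαtilde : αtilde = sSup {β : ℝ | β ∈ Set.Ioo (0:ℝ) 1 ∧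
        (∑ i, VaR P α (X i)) ≤ VaR P β (fun ω => ∑ i, X i ω)}) :
    (∀ᵐ ω ∂P,
      DQVaR P α X ≤ atTop.liminf (fun N => mDQVaR (empJoint N (fun k => fun i => Xs k i ω)) α)
      ∧ atTop.limsup (fun N => mDQVaR (empJoint N (fun k => fun i => Xs k i ω)) α) ≤ αtilde / α)
    ∧ (StrictAntiOn (fun β => VaR P β (fun ω => ∑ i, X i ω)) (Set.Ioo (0:ℝ) 1) →
        ∀ᵐ ω ∂P, Tendsto (fun N => mDQVaR (empJoint N (fun k => fun i => Xs k i ω)) α)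
          atTop (𝓝 (DQVaR P α X))) := by
  classical
  obtain ⟨hα0, hα1⟩ := hα
  have hSm : Measurable (fun ω => ∑ i, X i ω) := Finset.measurable_sum _ (fun i _ => hXm i)
  have hsumm : Measurable (fun y : Fin n → ℝ => ∑ j, y j) :=
    Finset.measurable_sum _ (fun j _ => measurable_pi_apply j)
  -- the true CDFs
  set FS : ℝ → ℝ := fun x => (P {ω' | (∑ j, X j ω') ≤ x}).toReal with hFS_def
  set FI : Fin n → ℝ → ℝ := fun i x => (P {ω' | X i ω' ≤ x}).toReal with hFI_def
  have hFSprops := trueCDF_props P hSm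
  have hFIprops := fun i : Fin n => trueCDF_props P (hXm i)
  -- the almost sure event
  have hae : ∀ᵐ ω ∂P,
      ((∀ i : Fin n, ∀ r : ℚ, Tendsto
          (fun N => (((empJoint N (fun k i' => Xs k i' ω)).map (fun y => y i))
            (Set.Iic (r:ℝ))).toReal) atTop (𝓝 (FI i (r:ℝ))))
       ∧ (∀ r : ℚ, Tendsto
          (fun N => (((empJoint N (fun k i' => Xs k i' ω)).map (fun y => ∑ j, y j))
            (Set.Iic (r:ℝ))).toReal) atTop (𝓝 (FS (r:ℝ))))) := by
    refine Filter.Eventually.and ?_ ?_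
    · rw [ae_all_iff]
      intro i
      rw [ae_all_iff]
      intro r
      exact slln_cdf P Xs X hXsm hXm hindep hident (measurable_pi_apply i) (r:ℝ)
    · rw [ae_all_iff]
      intro r
      exact slln_cdf P Xs X hXsm hXm hindep hident hsumm (r:ℝ)
  -- value of the true DQ
  set astar : ℝ := sInf (insert 1 {β : ℝ | β ∈ Set.Ioo (0:ℝ) 1 ∧
      Qf FS (1-β) ≤ ∑ i, Qf (FI i) (1-α)}) with hastar_def
  have hDQ : DQVaR P α X = astar / α := rfl
  have hdet : ∀ ω,
      (∀ i : Fin n, ∀ r : ℚ, Tendsto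
          (fun N => (((empJoint N (fun k i' => Xs k i' ω)).map (fun y => y i))
            (Set.Iic (r:ℝ))).toReal) atTop (𝓝 (FI i (r:ℝ)))) →
      (∀ r : ℚ, Tendsto
          (fun N => (((empJoint N (fun k i' => Xs k i' ω)).map (fun y => ∑ j, y j))
            (Set.Iic (r:ℝ))).toReal) atTop (𝓝 (FS (r:ℝ)))) →
      astar / α ≤ atTop.liminf (fun N => mDQVaR (empJoint N (fun k i' => Xs k i' ω)) α)
      ∧ atTop.limsup (fun N => mDQVaR (empJoint N (fun k i' => Xs k i' ω)) α) ≤ αtilde / α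
      ∧ (astar = αtilde →
          Tendsto (fun N => mDQVaR (empJoint N (fun k i' => Xs k i' ω)) α) atTop
            (𝓝 (astar / α))) := by
    intro ω h1 h2
    exact det_main (fun k i' => Xs k i' ω) α hα0 hα1 FS FI
      hFSprops.1 hFSprops.2.1 hFSprops.2.2
      (fun i => (hFIprops i).1) (fun i => (hFIprops i).2.1) (fun i => (hFIprops i).2.2)
      (fun p hp => hqS.continuousAt (isOpen_Ioo.mem_nhds hp))
      (fun i => hqX i) h2 h1 astar αtilde rfl hαtilde
  constructor
  · filter_upwards [hae] with ω hω
    obtain ⟨h1, h2⟩ := hω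
    obtain ⟨g1, g2, _⟩ := hdet ω h1 h2
    exact ⟨g1, g2⟩
  · intro hSA
    -- identify astar with αtilde
    have hαtilde' : αtilde = sSup {β : ℝ | β ∈ Set.Ioo (0:ℝ) 1 ∧
        (∑ i, Qf (FI i) (1-α)) ≤ Qf FS (1-β)} := hαtilde
    have hastar_ge : ∀ x ∈ insert 1 {β : ℝ | β ∈ Set.Ioo (0:ℝ) 1 ∧
        Qf FS (1-β) ≤ ∑ i, Qf (FI i) (1-α)}, (0:ℝ) ≤ x := by
      intro x hx
      rcases Set.mem_insert_iff.1 hx with h | h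
      · rw [h]; exact zero_le_one
      · exact h.1.1.le
    have hastar_nonneg : 0 ≤ astar := Real.sInf_nonneg hastar_ge
    have hastar_le_one : astar ≤ 1 := csInf_le ⟨0, hastar_ge⟩ (Set.mem_insert _ _)
    have hatil_nonneg : 0 ≤ αtilde := by
      rw [hαtilde']; exact Real.sSup_nonneg (fun x hx => hx.1.1.le)
    have hatil_le_one : αtilde ≤ 1 := by
      rw [hαtilde']; exact Real.sSup_le (fun x hx => hx.1.2.le) zero_le_one
    have hSA' : ∀ x ∈ Set.Ioo (0:ℝ) 1, ∀ y ∈ Set.Ioo (0:ℝ) 1, x < y →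
        Qf FS (1-y) < Qf FS (1-x) := by
      intro x hx y hy hxy
      exact hSA hx hy hxy
    have heq : astar = αtilde := by
      refine le_antisymm ?_ ?_
      · by_contra hlt
        push_neg at hlt
        obtain ⟨β, hβ1, hβ2⟩ := exists_between hlt
        have hβ0 : 0 < β := lt_of_le_of_lt hatil_nonneg hβ1
        have hβlt1 : β < 1 := lt_of_lt_of_le hβ2 hastar_le_one
        have hnm : β ∉ insert 1 {β : ℝ | β ∈ Set.Ioo (0:ℝ) 1 ∧
            Qf FS (1-β) ≤ ∑ i, Qf (FI i) (1-α)} := by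
          intro hmem
          exact absurd (csInf_le ⟨0, hastar_ge⟩ hmem) (not_le.2 hβ2)
        have hβmem : β ∈ {β : ℝ | β ∈ Set.Ioo (0:ℝ) 1 ∧
            (∑ i, Qf (FI i) (1-α)) ≤ Qf FS (1-β)} := by
          refine ⟨⟨hβ0, hβlt1⟩, ?_⟩
          by_contra hnle
          exact hnm (Set.mem_insert_of_mem _ ⟨⟨hβ0, hβlt1⟩, (not_le.1 hnle).le⟩)
        have : β ≤ αtilde := by
          rw [hαtilde']; exact le_csSup ⟨1, fun x hx => hx.1.2.le⟩ hβmem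
        linarith
      · by_contra hlt
        push_neg at hlt
        obtain ⟨β1, hb11, hb12⟩ := exists_between hlt
        obtain ⟨β2, hb21, hb22⟩ := exists_between hb12
        have hb10 : 0 < β1 := lt_of_le_of_lt hastar_nonneg hb11
        have hb2lt1 : β2 < 1 := lt_of_lt_of_le hb22 hatil_le_one
        obtain ⟨xx, hxxmem, hxxlt⟩ := (csInf_lt_iff ⟨0, hastar_ge⟩
          ⟨1, Set.mem_insert _ _⟩).1 (show sInf (insert 1 {β : ℝ | β ∈ Set.Ioo (0:ℝ) 1 ∧
            Qf FS (1-β) ≤ ∑ i, Qf (FI i) (1-α)}) < β1 from hastar_def ▸ hb11)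
        have hxx1 : xx ≠ 1 := by
          intro h
          rw [h] at hxxlt
          have : β1 < 1 := lt_trans hb21 hb2lt1
          linarith
        have hxxS : xx ∈ {β : ℝ | β ∈ Set.Ioo (0:ℝ) 1 ∧
            Qf FS (1-β) ≤ ∑ i, Qf (FI i) (1-α)} := by
          rcases Set.mem_insert_iff.1 hxxmem with h | h
          · exact absurd h hxx1
          · exact h
        have hSne : {β : ℝ | β ∈ Set.Ioo (0:ℝ) 1 ∧
            (∑ i, Qf (FI i) (1-α)) ≤ Qf FS (1-β)}.Nonempty := by
          by_contra hemp
          rw [Set.not_nonempty_iff_eq_empty] at hemp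
          have : αtilde = 0 := by rw [hαtilde', hemp, Real.sSup_empty]
          linarith
        obtain ⟨yy, hyymem, hyylt⟩ := (lt_csSup_iff ⟨1, fun x hx => hx.1.2.le⟩ hSne).1
          (show β2 < sSup {β : ℝ | β ∈ Set.Ioo (0:ℝ) 1 ∧
            (∑ i, Qf (FI i) (1-α)) ≤ Qf FS (1-β)} from hαtilde' ▸ hb22)
        have hxy : xx < yy := lt_trans hxxlt (lt_trans hb21 hyylt)
        have := hSA' xx hxxS.1 yy hyymem.1 hxy
        have h1 := hxxS.2
        have h2 := hyymem.2
        linarith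
    filter_upwards [hae] with ω hω
    obtain ⟨h1, h2⟩ := hω
    obtain ⟨_, _, g3⟩ := hdet ω h1 h2
    exact g3 heq
end

section
/- For every random vector X = (X_1,…,X_n) of real random variables with S = Σ_{i=1}^n X_i and every α ∈ (0,1), DQ^{VaR}_α(X) = (1/α) · P(S > Σ_{i=1}^n VaR_α(X_i)). -/
open MeasureTheory Filter

lemma VaR_le_iff {Ω : Type*} [MeasurableSpace Ω] (P : Measure Ω) [IsProbabilityMeasure P]
    {S : Ω → ℝ} (hS : Measurable S) {β t : ℝ} (hβ : β ∈ Set.Ioo (0:ℝ) 1) :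
    VaR P β S ≤ t ↔ 1 - β ≤ (P {ω | S ω ≤ t}).toReal := by
  set F : ℝ → ℝ := fun x => (P {ω | S ω ≤ x}).toReal with hF
  have hFmono : Monotone F := by
    intro x y hxy
    exact ENNReal.toReal_mono (measure_ne_top _ _)
      (measure_mono (fun ω h => le_trans h hxy))
  have hmeas : ∀ x : ℝ, MeasurableSet {ω | S ω ≤ x} := fun x => hS measurableSet_Iic
  have hβpos : (0:ℝ) < 1 - β := by linarith [hβ.2]
  have hbdd : BddBelow {x : ℝ | 1 - β ≤ F x} := by
    have h1 : Tendsto (fun n : ℕ => P {ω | S ω ≤ -(n:ℝ)}) atTop (nhds 0) := by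
      have hanti : Antitone fun n : ℕ => {ω | S ω ≤ -(n:ℝ)} := by
        intro a b hab ω h
        simp only [Set.mem_setOf_eq] at h ⊢
        have : -(b:ℝ) ≤ -(a:ℝ) := by exact_mod_cast neg_le_neg (Nat.cast_le.mpr hab)
        linarith
      have := tendsto_measure_iInter_atTop (μ := P) (s := fun n : ℕ => {ω | S ω ≤ -(n:ℝ)})
        (fun n => (hmeas _).nullMeasurableSet) hanti ⟨0, measure_ne_top _ _⟩
      have hempty : (⋂ n : ℕ, {ω | S ω ≤ -(n:ℝ)}) = ∅ := by
        ext ω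
        simp only [Set.mem_iInter, Set.mem_setOf_eq, Set.mem_empty_iff_false, iff_false, not_forall]
        obtain ⟨n, hn⟩ := exists_nat_gt (-(S ω))
        exact ⟨n, by push_neg; linarith⟩
      rw [hempty, measure_empty] at this
      exact this
    have h2 : Tendsto (fun n : ℕ => F (-(n:ℝ))) atTop (nhds 0) := by
      have := (ENNReal.tendsto_toReal (a := 0) (by simp)).comp h1
      exact this
    obtain ⟨N, hN⟩ := (h2.eventually (eventually_lt_nhds hβpos)).exists
    refine ⟨-(N:ℝ), fun y hy => ?_⟩
    by_contra hc
    push_neg at hc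
    have : F y ≤ F (-(N:ℝ)) := hFmono hc.le
    have hy' : 1 - β ≤ F y := hy
    linarith
  have hne : Set.Nonempty {x : ℝ | 1 - β ≤ F x} := by
    have h1 : Tendsto (fun n : ℕ => P {ω | S ω ≤ (n:ℝ)}) atTop (nhds 1) := by
      have hmono : Monotone fun n : ℕ => {ω | S ω ≤ (n:ℝ)} := by
        intro a b hab ω h
        simp only [Set.mem_setOf_eq] at h ⊢
        have : (a:ℝ) ≤ (b:ℝ) := Nat.cast_le.mpr hab
        linarith
      have := tendsto_measure_iUnion_atTop (μ := P) hmono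
      have huniv : (⋃ n : ℕ, {ω | S ω ≤ (n:ℝ)}) = Set.univ := by
        ext ω
        simp only [Set.mem_iUnion, Set.mem_setOf_eq, Set.mem_univ, iff_true]
        obtain ⟨n, hn⟩ := exists_nat_gt (S ω)
        exact ⟨n, hn.le⟩
      rw [huniv, measure_univ] at this
      exact this
    have h2 : Tendsto (fun n : ℕ => F ((n:ℝ))) atTop (nhds 1) := by
      have := (ENNReal.tendsto_toReal (a := 1) (by simp)).comp h1
      exact this
    have : ∀ᶠ n : ℕ in atTop, 1 - β < F n :=
      h2.eventually (eventually_gt_nhds (by linarith [hβ.1]))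
    obtain ⟨N, hN⟩ := this.exists
    exact ⟨(N:ℝ), hN.le⟩
  constructor
  · intro h
    have key : ∀ ε > (0:ℝ), 1 - β ≤ F (t + ε) := by
      intro ε hε
      have hlt : VaR P β S < t + ε := lt_of_le_of_lt h (by linarith)
      obtain ⟨y, hyA, hyt⟩ := (csInf_lt_iff hbdd hne).mp hlt
      exact le_trans hyA (hFmono hyt.le)
    have hanti : Antitone fun n : ℕ => {ω | S ω ≤ t + 1/((n:ℝ)+1)} := by
      intro a b hab ω h
      simp only [Set.mem_setOf_eq] at h ⊢
      have h2 : 1/((b:ℝ)+1) ≤ 1/((a:ℝ)+1) := by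
        apply one_div_le_one_div_of_le
        · positivity
        · have : (a:ℝ) ≤ (b:ℝ) := Nat.cast_le.mpr hab
          linarith
      linarith
    have h1 : Tendsto (fun n : ℕ => P {ω | S ω ≤ t + 1/((n:ℝ)+1)}) atTop
        (nhds (P {ω | S ω ≤ t})) := by
      have := tendsto_measure_iInter_atTop (μ := P) (s := fun n : ℕ => {ω | S ω ≤ t + 1/((n:ℝ)+1)})
        (fun n => (hmeas _).nullMeasurableSet) hanti ⟨0, measure_ne_top _ _⟩
      have hint : (⋂ n : ℕ, {ω | S ω ≤ t + 1/((n:ℝ)+1)}) = {ω | S ω ≤ t} := by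
        ext ω
        simp only [Set.mem_iInter, Set.mem_setOf_eq]
        constructor
        · intro h
          by_contra hc
          push_neg at hc
          obtain ⟨n, hn⟩ := exists_nat_one_div_lt (show (0:ℝ) < S ω - t by linarith)
          have := h n
          linarith
        · intro h n
          have : (0:ℝ) < 1/((n:ℝ)+1) := by positivity
          linarith
      rw [hint] at this
      exact this
    have h2 : Tendsto (fun n : ℕ => F (t + 1/((n:ℝ)+1))) atTop (nhds (F t)) := by
      have := (ENNReal.tendsto_toReal (measure_ne_top P _)).comp h1
      exact this
    exact ge_of_tendsto h2 (Eventually.of_forall fun n => key _ (by positivity))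
  · intro h
    exact csInf_le hbdd h

/-- For every random vector `X = (X_1,…,X_n)` with `S = ∑ X_i` and every
`α ∈ (0,1)`, `DQ^{VaR}_α(X) = (1/α) ⬝ P(S > ∑_i VaR_α(X_i))`. -/
theorem DQVaR_prob_formula
    {Ω : Type*} [MeasurableSpace Ω] (P : Measure Ω) [IsProbabilityMeasure P]
    {n : ℕ} (X : Fin n → Ω → ℝ) (hXm : ∀ i, Measurable (X i))
    (α : ℝ) (hα : α ∈ Set.Ioo (0:ℝ) 1) :
    DQVaR P α X
      = (1 / α) * (P {ω | (∑ i, VaR P α (X i)) < ∑ i, X i ω}).toReal := by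
  obtain ⟨hα0, hα1⟩ := hα
  set S : Ω → ℝ := fun ω => ∑ i, X i ω with hSdef
  have hSm : Measurable S := Finset.measurable_sum _ fun i _ => hXm i
  set t : ℝ := ∑ i, VaR P α (X i) with ht
  have hmeasT : MeasurableSet {ω | S ω ≤ t} := hSm measurableSet_Iic
  set b : ℝ := (P {ω | t < S ω}).toReal with hb
  have hcompl : {ω | t < S ω} = {ω | S ω ≤ t}ᶜ := by
    ext ω; simp [not_le]
  have hsum : (P {ω | S ω ≤ t}).toReal + b = 1 := by
    rw [hb, hcompl, ← ENNReal.toReal_add (measure_ne_top _ _) (measure_ne_top _ _),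
      measure_add_measure_compl hmeasT]
    simp
  have hb0 : 0 ≤ b := ENNReal.toReal_nonneg
  have hb1 : b ≤ 1 := by
    have : (0:ℝ) ≤ (P {ω | S ω ≤ t}).toReal := ENNReal.toReal_nonneg
    linarith
  have hGiff : ∀ β ∈ Set.Ioo (0:ℝ) 1, (VaR P β S ≤ t ↔ b ≤ β) := by
    intro β hβ
    rw [VaR_le_iff P hSm hβ]
    constructor <;> intro h <;> linarith
  have hbddG : BddBelow (insert 1 {β : ℝ | β ∈ Set.Ioo (0:ℝ) 1 ∧ VaR P β S ≤ t}) := by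
    refine ⟨0, fun c hc => ?_⟩
    rcases hc with rfl | hc
    · norm_num
    · exact hc.1.1.le
  have key : sInf (insert 1 {β : ℝ | β ∈ Set.Ioo (0:ℝ) 1 ∧ VaR P β S ≤ t}) = b := by
    apply le_antisymm
    · apply le_of_forall_pos_le_add
      intro ε hε
      rcases lt_or_ge b 1 with hblt | hbge
      · set β := b + min (ε/2) ((1-b)/2) with hβdef
        have hmin : 0 < min (ε/2) ((1-b)/2) := lt_min (by linarith) (by linarith)
        have hβ0 : 0 < β := by dsimp [β]; linarith
        have hβ1 : β < 1 := by
          have : min (ε/2) ((1-b)/2) ≤ (1-b)/2 := min_le_right _ _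
          dsimp [β]; linarith
        have hβb : b ≤ β := by dsimp [β]; linarith
        have hmem : β ∈ insert 1 {β : ℝ | β ∈ Set.Ioo (0:ℝ) 1 ∧ VaR P β S ≤ t} :=
          Set.mem_insert_of_mem _ ⟨⟨hβ0, hβ1⟩, (hGiff β ⟨hβ0, hβ1⟩).mpr hβb⟩
        have := csInf_le hbddG hmem
        have hβle : β ≤ b + ε := by
          have : min (ε/2) ((ε:ℝ)) ≤ ε := min_le_right _ _
          have h2 : min (ε/2) ((1-b)/2) ≤ ε/2 := min_le_left _ _
          dsimp [β] at *; linarith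
        linarith
      · have h1mem : (1:ℝ) ∈ insert 1 {β : ℝ | β ∈ Set.Ioo (0:ℝ) 1 ∧ VaR P β S ≤ t} :=
          Set.mem_insert _ _
        have := csInf_le hbddG h1mem
        linarith
    · apply le_csInf ⟨1, Set.mem_insert _ _⟩
      intro c hc
      rcases hc with rfl | hc
      · exact hb1
      · exact (hGiff c hc.1).mp hc.2
  show sInf (insert 1 {β : ℝ | β ∈ Set.Ioo (0:ℝ) 1 ∧ VaR P β S ≤ t}) / α = 1/α * b
  rw [key]; ring
end

section
/- Suppose X = (X_1,…,X_n) follows an elliptical distribution E_n(μ, Σ, τ), i.e., E[exp(i tᵀX)] = exp(i tᵀμ)·τ(tᵀΣt) for all t ∈ ℝ^n, where Σ = (σ_{ij}) is positive semi-definite with 1ᵀΣ1 > 0, and let Y ~ E_1(0, 1, τ) be a one-dimensional elliptical random variable with the same characteristic generator τ and CDF F. Set k_Σ = (Σ_{i=1}^n σ_i)/(Σ_{i,j} σ_{ij})^{1/2} with σ_i = √σ_{ii}. Then for every α ∈ (0,1), DQ^{VaR}_α(X) = (1 − F(k_Σ · VaR_α(Y)))/α. -/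
open MeasureTheory

section Aux

open Real Filter FourierTransform


/-- A smooth compactly supported function is a Schwartz map. -/
noncomputable def smoothCompSuppSchwartz (g : ℝ → ℂ) (hg : ContDiff ℝ ((⊤:ℕ∞) : WithTop ℕ∞) g)
    (hsupp : HasCompactSupport g) : SchwartzMap ℝ ℂ where
  toFun := g
  smooth' := hg
  decay' := by
    intro k n
    have hcont : Continuous fun x : ℝ => ‖x‖ ^ k * ‖iteratedFDeriv ℝ n g x‖ :=
      (continuous_norm.pow k).mul
        ((hg.continuous_iteratedFDeriv (by exact_mod_cast le_top)).norm)
    have hcs : HasCompactSupport fun x : ℝ => ‖x‖ ^ k * ‖iteratedFDeriv ℝ n g x‖ :=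
      ((hsupp.iteratedFDeriv (𝕜 := ℝ) n).norm).mul_left
    obtain ⟨x0, hx0⟩ := hcont.exists_forall_ge_of_hasCompactSupport hcs
    exact ⟨_, fun x => hx0 x⟩

@[simp] lemma smoothCompSuppSchwartz_apply (g : ℝ → ℂ) (hg) (hs) (x : ℝ) :
    smoothCompSuppSchwartz g hg hs x = g x := rfl

variable {Ω : Type*} [MeasurableSpace Ω] (P : Measure Ω) [IsProbabilityMeasure P]

lemma integral_schwartz_char (Z : Ω → ℝ) (hZ : Measurable Z) (F : SchwartzMap ℝ ℂ) :
    ∫ ω, F (Z ω) ∂P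
      = ∫ ξ : ℝ, (∫ ω, Complex.exp (Complex.I * ((2 * π * ξ * Z ω : ℝ) : ℂ)) ∂P) * 𝓕 (⇑F) ξ := by
  have hGint : Integrable (𝓕 ⇑F) volume := by
    have : 𝓕 ⇑F = ⇑(SchwartzMap.fourierTransformCLM ℂ F) := by simp [SchwartzMap.fourier_coe]
    rw [this]; exact (SchwartzMap.fourierTransformCLM ℂ F).integrable
  have hGcont : Continuous (𝓕 ⇑F) := by
    have : 𝓕 ⇑F = ⇑(SchwartzMap.fourierTransformCLM ℂ F) := by simp [SchwartzMap.fourier_coe]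
    rw [this]; exact (SchwartzMap.fourierTransformCLM ℂ F).continuous
  have hinv : ∀ x : ℝ, F x = ∫ ξ : ℝ, Complex.exp (Complex.I * ((2 * π * ξ * x : ℝ) : ℂ)) * 𝓕 ⇑F ξ := by
    intro x
    have h1 : 𝓕⁻ (𝓕 ⇑F) x = F x :=
      congrFun (Continuous.fourierInv_fourier_eq F.continuous F.integrable hGint) x
    rw [← h1, Real.fourierInv_eq']
    congr 1 with ξ
    have : (inner ℝ ξ x : ℝ) = ξ * x := by simp [RCLike.inner_apply]; ring
    rw [this, smul_eq_mul]
    ring_nf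
  -- the kernel as a function on the product
  set K : Ω × ℝ → ℂ := fun p =>
    Complex.exp (Complex.I * ((2 * π * p.2 * Z p.1 : ℝ) : ℂ)) * 𝓕 ⇑F p.2 with hK
  have hKmeas : AEStronglyMeasurable K (P.prod volume) := by
    apply Measurable.aestronglyMeasurable
    apply Measurable.mul
    · apply Complex.measurable_exp.comp
      apply (measurable_const.mul _)
      exact Complex.measurable_ofReal.comp
        ((measurable_const.mul measurable_snd).mul (hZ.comp measurable_fst))
    · exact hGcont.measurable.comp measurable_snd
  have hnorm : ∀ p : Ω × ℝ, ‖K p‖ = ‖𝓕 ⇑F p.2‖ := by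
    intro p
    rw [hK]
    simp only [norm_mul]
    have : Complex.I * ((2 * π * p.2 * Z p.1 : ℝ) : ℂ) = ((2 * π * p.2 * Z p.1 : ℝ) : ℂ) * Complex.I := by ring
    rw [this]
    rw [Complex.norm_exp_ofReal_mul_I, one_mul]
  have hKint : Integrable K (P.prod volume) := by
    rw [integrable_prod_iff hKmeas]
    constructor
    · filter_upwards with ω
      show Integrable (fun ξ : ℝ =>
        Complex.exp (Complex.I * ((2 * π * ξ * Z ω : ℝ) : ℂ)) * 𝓕 ⇑F ξ) volume
      apply hGint.bdd_mul
      · apply Continuous.aestronglyMeasurable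
        exact Complex.continuous_exp.comp (continuous_const.mul
          (Complex.continuous_ofReal.comp ((continuous_const.mul continuous_id).mul continuous_const)))
      · refine Filter.Eventually.of_forall (fun ξ => le_of_eq (b := (1:ℝ)) ?_)
        have : Complex.I * ((2 * π * ξ * Z ω : ℝ) : ℂ)
            = ((2 * π * ξ * Z ω : ℝ) : ℂ) * Complex.I := by ring
        rw [this, Complex.norm_exp_ofReal_mul_I]
    · simp only [hnorm]
      exact integrable_const ((∫ ξ : ℝ, ‖𝓕 ⇑F ξ‖)) |>.congr (by
        filter_upwards with ω; rfl)
  have hswap := integral_integral_swap (f := fun ω ξ => K (ω, ξ)) hKint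
  calc ∫ ω, F (Z ω) ∂P = ∫ ω, ∫ ξ : ℝ, K (ω, ξ) ∂volume ∂P := by
        congr 1 with ω; exact hinv (Z ω)
    _ = ∫ ξ : ℝ, ∫ ω, K (ω, ξ) ∂P ∂volume := hswap
    _ = _ := by
        congr 1 with ξ
        simp only [hK]
        exact integral_mul_const _ _

variable {Ω : Type*} [MeasurableSpace Ω] {P : Measure Ω} [IsProbabilityMeasure P]


/-- integrals of bumps converge to the CDF -/
lemma tendsto_integral_bump (Z : Ω → ℝ) (hZ : Measurable Z) (x : ℝ)
    (b : ℕ → ℝ → ℝ)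
    (hb01 : ∀ (m : ℕ) (y : ℝ), b m y ∈ Set.Icc (0:ℝ) 1)
    (hb1 : ∀ (m : ℕ) (y : ℝ), x - (m+1) ≤ y → y ≤ x → b m y = 1)
    (hb0 : ∀ (m : ℕ) (y : ℝ), (y < x - (m+1) - 1 ∨ x + 1/(m+1) ≤ y) → b m y = 0)
    (hbm : ∀ m, Measurable (b m)) :
    Tendsto (fun m => ∫ ω, b m (Z ω) ∂P) atTop (nhds ((P {ω | Z ω ≤ x}).toReal)) := by
  have hset : MeasurableSet {ω | Z ω ≤ x} := measurableSet_le hZ measurable_const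
  have hlim : ∫ ω, ({ω | Z ω ≤ x}).indicator (fun _ => (1:ℝ)) ω ∂P = (P {ω | Z ω ≤ x}).toReal := by
    rw [← measureReal_def]; exact integral_indicator_one (μ := P) hset
  rw [← hlim]
  apply tendsto_integral_of_dominated_convergence (fun _ => (1:ℝ))
  · exact fun m => ((hbm m).comp hZ).aestronglyMeasurable
  · exact integrable_const 1
  · intro m
    filter_upwards with ω
    rw [Real.norm_eq_abs, abs_of_nonneg (hb01 m (Z ω)).1]
    exact (hb01 m (Z ω)).2
  · filter_upwards with ω
    by_cases h : Z ω ≤ x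
    · have : ∀ᶠ m in atTop, b m (Z ω) = 1 := by
        obtain ⟨N, hN⟩ := exists_nat_ge (x - Z ω)
        filter_upwards [eventually_ge_atTop N] with m hm
        apply hb1 m _ _ h
        have : (N:ℝ) ≤ m + 1 := by
          have : (N:ℝ) ≤ m := Nat.cast_le.mpr hm; linarith
        linarith
      have h1 : ({ω | Z ω ≤ x}).indicator (fun _ => (1:ℝ)) ω = 1 := Set.indicator_of_mem (show ω ∈ {ω | Z ω ≤ x} from h) _
      rw [h1]
      exact Tendsto.congr' (by filter_upwards [this] with m hm; exact hm.symm) tendsto_const_nhds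
    · push_neg at h
      have : ∀ᶠ m in atTop, b m (Z ω) = 0 := by
        obtain ⟨N, hN⟩ := exists_nat_ge (1 / (Z ω - x))
        filter_upwards [eventually_ge_atTop N] with m hm
        apply hb0 m _ (Or.inr _)
        have hNm : (N:ℝ) ≤ m + 1 := by
          have : (N:ℝ) ≤ m := Nat.cast_le.mpr hm; linarith
        have hpos : (0:ℝ) < Z ω - x := by linarith
        have h1 : 1 / (Z ω - x) ≤ m + 1 := le_trans hN hNm
        have h2 : 1 / ((m:ℝ) + 1) ≤ Z ω - x := by
          rw [div_le_iff₀ (by positivity)]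
          rw [div_le_iff₀ hpos] at h1
          linarith [h1]
        linarith
      have h0 : ({ω | Z ω ≤ x}).indicator (fun _ => (1:ℝ)) ω = 0 :=
        Set.indicator_of_notMem (show ω ∉ {ω | Z ω ≤ x} by simpa using h.not_ge) _
      rw [h0]
      exact Tendsto.congr' (by filter_upwards [this] with m hm; exact hm.symm) tendsto_const_nhds

variable (P) in
lemma cdf_eq_of_char (Z W : Ω → ℝ) (hZ : Measurable Z) (hW : Measurable W)
    (h : ∀ t : ℝ, (∫ ω, Complex.exp (Complex.I * ((t * Z ω : ℝ) : ℂ)) ∂P)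
      = ∫ ω, Complex.exp (Complex.I * ((t * W ω : ℝ) : ℂ)) ∂P) (x : ℝ) :
    (P {ω | Z ω ≤ x}).toReal = (P {ω | W ω ≤ x}).toReal := by
  -- bump functions
  have hbump : ∀ m : ℕ, ∃ b : ℝ → ℝ,
      (∀ y : ℝ, b y ∈ Set.Icc (0:ℝ) 1) ∧
      (∀ y : ℝ, x - (m+1) ≤ y → y ≤ x → b y = 1) ∧
      (∀ y : ℝ, (y < x - (m+1) - 1 ∨ x + 1/(m+1) ≤ y) → b y = 0) ∧
      Measurable b ∧
      ∃ F : SchwartzMap ℝ ℂ, ∀ y : ℝ, F y = (b y : ℂ) := by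
    intro m
    have hm0 : (0:ℝ) ≤ m := Nat.cast_nonneg m
    have h1m : (0:ℝ) < 1/(m+1) := by positivity
    have h1m' : (1:ℝ)/(m+1) ≤ 1 := by
      rw [div_le_one (by positivity)]; linarith [Nat.cast_nonneg (α := ℝ) m]
    let hbd : ContDiffBump ((x - (m+1)/2 : ℝ)) :=
      ⟨(m+1)/2, (m+1)/2 + 1/(m+1), by positivity, by linarith⟩
    have hrIn : hbd.rIn = (m+1)/2 := rfl
    have hrOut : hbd.rOut = (m+1)/2 + 1/(m+1) := rfl
    refine ⟨fun y => hbd y, fun y => ⟨hbd.nonneg, hbd.le_one⟩, ?_, ?_, ?_, ?_⟩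
    · intro y h1 h2
      apply hbd.one_of_mem_closedBall
      rw [Metric.mem_closedBall, Real.dist_eq, abs_le, hrIn]
      constructor <;> linarith
    · intro y hy
      apply hbd.zero_of_le_dist
      rw [Real.dist_eq, hrOut]
      rcases hy with hy | hy
      · rw [abs_of_nonpos (by linarith)]; linarith
      · rw [abs_of_nonneg (by linarith)]; linarith
    · exact hbd.continuous.measurable
    · exact ⟨smoothCompSuppSchwartz (fun y => ((hbd y : ℝ) : ℂ))
        (Complex.ofRealCLM.contDiff.comp hbd.contDiff)
        (hbd.hasCompactSupport.comp_left (g := fun r : ℝ => (r:ℂ)) (by simp)), fun y => rfl⟩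
  choose b hb01 hb1 hb0 hbm hbF using hbump
  choose F hF using hbF
  -- equality of bump integrals
  have hint : ∀ m, ∫ ω, b m (Z ω) ∂P = ∫ ω, b m (W ω) ∂P := by
    intro m
    have hZc : ∫ ω, F m (Z ω) ∂P = ∫ ω, F m (W ω) ∂P := by
      rw [integral_schwartz_char P Z hZ (F m), integral_schwartz_char P W hW (F m)]
      congr 1 with ξ
      congr 1
      exact h (2 * π * ξ)
    have hFZ : ∀ ω, (F m) (Z ω) = ((b m (Z ω) : ℝ) : ℂ) := fun ω => hF m (Z ω)
    have hFW : ∀ ω, (F m) (W ω) = ((b m (W ω) : ℝ) : ℂ) := fun ω => hF m (W ω)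
    simp only [hFZ, hFW] at hZc
    have eZ : ∫ ω, ((b m (Z ω) : ℝ) : ℂ) ∂P = ((∫ ω, b m (Z ω) ∂P : ℝ) : ℂ) := integral_ofReal
    have eW : ∫ ω, ((b m (W ω) : ℝ) : ℂ) ∂P = ((∫ ω, b m (W ω) ∂P : ℝ) : ℂ) := integral_ofReal
    rw [eZ, eW] at hZc
    exact_mod_cast hZc
  -- pass to the limit
  have hZlim := tendsto_integral_bump (P := P) Z hZ x b (fun m y => hb01 m y)
    (fun m y => hb1 m y) (fun m y => hb0 m y) hbm
  have hWlim := tendsto_integral_bump (P := P) W hW x b (fun m y => hb01 m y)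
    (fun m y => hb1 m y) (fun m y => hb0 m y) hbm
  exact tendsto_nhds_unique (hZlim.congr hint) hWlim


variable {Ω : Type*} [MeasurableSpace Ω] {P : Measure Ω} [IsProbabilityMeasure P]
  {Y : Ω → ℝ}

lemma cdf_mono (hY : Measurable Y) :
    Monotone fun x => (P {ω | Y ω ≤ x}).toReal := by
  intro a b hab
  apply ENNReal.toReal_le_toReal (measure_ne_top _ _) (measure_ne_top _ _) |>.mpr
  exact measure_mono fun ω (h : Y ω ≤ a) => le_trans h hab

lemma cdf_le_one : ∀ x, (P {ω | Y ω ≤ x}).toReal ≤ 1 := fun x => by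
  simpa using ENNReal.toReal_le_toReal (measure_ne_top _ _) (measure_ne_top P Set.univ) |>.mpr
    (measure_mono (Set.subset_univ _))

lemma cdf_nonneg : ∀ x, 0 ≤ (P {ω | Y ω ≤ x}).toReal := fun _ => ENNReal.toReal_nonneg

lemma cdf_tendsto_right (hY : Measurable Y) (x : ℝ) :
    Tendsto (fun n : ℕ => (P {ω | Y ω ≤ x + 1/(n+1)}).toReal) atTop
      (nhds ((P {ω | Y ω ≤ x}).toReal)) := by
  have hmeas : ∀ n : ℕ, NullMeasurableSet {ω | Y ω ≤ x + 1/(n+1)} P :=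
    fun n => (measurableSet_le hY measurable_const).nullMeasurableSet
  have hanti : Antitone fun n : ℕ => {ω | Y ω ≤ x + 1/(n+1)} := by
    intro a b hab ω (h : Y ω ≤ _)
    refine le_trans h (add_le_add (le_refl x) ?_)
    apply one_div_le_one_div_of_le (by positivity)
    exact_mod_cast Nat.succ_le_succ hab
  have hInter : ⋂ n : ℕ, {ω | Y ω ≤ x + 1/(n+1)} = {ω | Y ω ≤ x} := by
    ext ω
    simp only [Set.mem_iInter, Set.mem_setOf_eq]
    constructor
    · intro h
      refine le_of_forall_pos_le_add fun ε hε => ?_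
      obtain ⟨n, hn⟩ := exists_nat_one_div_lt hε
      exact le_trans (h n) (by linarith [hn])
    · intro h n
      have hp : (0:ℝ) < 1/(n+1) := by positivity
      linarith
  have := MeasureTheory.tendsto_measure_iInter_atTop hmeas hanti ⟨0, measure_ne_top _ _⟩
  rw [hInter] at this
  exact (ENNReal.tendsto_toReal (measure_ne_top _ _)).comp this

lemma cdf_exists_ge (hY : Measurable Y) {r : ℝ} (hr : r < 1) :
    ∃ x : ℝ, r ≤ (P {ω | Y ω ≤ x}).toReal := by
  have hmono : Monotone fun n : ℕ => {ω | Y ω ≤ (n:ℝ)} := by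
    intro a b hab ω (h : Y ω ≤ _)
    exact le_trans h (by exact_mod_cast hab)
  have hU : ⋃ n : ℕ, {ω | Y ω ≤ (n:ℝ)} = Set.univ := by
    ext ω; simp only [Set.mem_iUnion, Set.mem_setOf_eq, Set.mem_univ, iff_true]
    exact exists_nat_ge (Y ω)
  have h1 := tendsto_measure_iUnion_atTop (μ := P) hmono
  rw [hU, measure_univ] at h1
  have h2 := (ENNReal.tendsto_toReal (by simp)).comp h1
  simp only [ENNReal.toReal_one] at h2
  have := h2.eventually (eventually_gt_nhds hr)
  obtain ⟨n, hn⟩ := this.exists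
  exact ⟨n, le_of_lt hn⟩

lemma cdf_exists_lt (hY : Measurable Y) {r : ℝ} (hr : 0 < r) :
    ∃ x : ℝ, (P {ω | Y ω ≤ x}).toReal < r := by
  have hmeas : ∀ n : ℕ, NullMeasurableSet {ω | Y ω ≤ -(n:ℝ)} P :=
    fun n => (measurableSet_le hY measurable_const).nullMeasurableSet
  have hanti : Antitone fun n : ℕ => {ω | Y ω ≤ -(n:ℝ)} := by
    intro a b hab ω (h : Y ω ≤ _)
    refine le_trans h (neg_le_neg ?_)
    exact_mod_cast hab
  have hI : ⋂ n : ℕ, {ω | Y ω ≤ -(n:ℝ)} = ∅ := by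
    ext ω
    simp only [Set.mem_iInter, Set.mem_setOf_eq, Set.mem_empty_iff_false, iff_false, not_forall]
    obtain ⟨n, hn⟩ := exists_nat_ge (-(Y ω) + 1)
    exact ⟨n, by push_neg; linarith⟩
  have h1 := MeasureTheory.tendsto_measure_iInter_atTop hmeas hanti ⟨0, measure_ne_top _ _⟩
  rw [hI, measure_empty] at h1
  have h2 := (ENNReal.tendsto_toReal (by simp)).comp h1
  simp only [ENNReal.toReal_zero] at h2
  obtain ⟨n, hn⟩ := (h2.eventually (eventually_lt_nhds hr)).exists
  exact ⟨-(n:ℝ), hn⟩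

lemma cdf_set_nonempty (hY : Measurable Y) {β : ℝ} (hβ : 0 < β) :
    {x : ℝ | 1 - β ≤ (P {ω | Y ω ≤ x}).toReal}.Nonempty := by
  obtain ⟨x, hx⟩ := cdf_exists_ge (P := P) hY (show (1:ℝ) - β < 1 by linarith)
  exact ⟨x, hx⟩

lemma cdf_set_bddBelow (hY : Measurable Y) {β : ℝ} (hβ : β < 1) :
    BddBelow {x : ℝ | 1 - β ≤ (P {ω | Y ω ≤ x}).toReal} := by
  obtain ⟨x0, hx0⟩ := cdf_exists_lt (P := P) hY (show (0:ℝ) < 1 - β by linarith)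
  refine ⟨x0, fun x hx => ?_⟩
  by_contra hlt
  push_neg at hlt
  exact absurd (le_trans hx (cdf_mono hY hlt.le)) (not_le.mpr hx0)

/-- right-continuity of the cdf at the infimum -/
lemma cdf_sInf_mem (hY : Measurable Y) {β : ℝ} (hβ : β ∈ Set.Ioo (0:ℝ) 1) :
    1 - β ≤ (P {ω | Y ω ≤ sInf {x : ℝ | 1 - β ≤ (P {ω | Y ω ≤ x}).toReal}}).toReal := by
  set A := {x : ℝ | 1 - β ≤ (P {ω | Y ω ≤ x}).toReal} with hA
  have hne := cdf_set_nonempty (P := P) hY hβ.1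
  have hbdd := cdf_set_bddBelow (P := P) hY hβ.2
  set v := sInf A with hv
  have key : ∀ n : ℕ, 1 - β ≤ (P {ω | Y ω ≤ v + 1/(n+1)}).toReal := by
    intro n
    have : v < v + 1/(n+1) := by
      have : (0:ℝ) < 1/(n+1) := by positivity
      linarith
    obtain ⟨x, hxA, hxlt⟩ := exists_lt_of_csInf_lt hne this
    exact le_trans hxA (cdf_mono hY hxlt.le)
  exact ge_of_tendsto (cdf_tendsto_right hY v) (Eventually.of_forall key)

lemma var_le_iff (hY : Measurable Y) {β : ℝ} (hβ : β ∈ Set.Ioo (0:ℝ) 1) (q : ℝ) :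
    sInf {x : ℝ | 1 - β ≤ (P {ω | Y ω ≤ x}).toReal} ≤ q
      ↔ 1 - β ≤ (P {ω | Y ω ≤ q}).toReal := by
  constructor
  · intro h
    exact le_trans (cdf_sInf_mem hY hβ) (cdf_mono hY h)
  · intro h
    exact csInf_le (cdf_set_bddBelow hY hβ.2) h

/-- infimum of an affine preimage -/
lemma sInf_affine_set {A : Set ℝ} (hne : A.Nonempty) (hbdd : BddBelow A)
    {μ0 σ : ℝ} (hσ : 0 < σ) :
    sInf {x : ℝ | (x - μ0)/σ ∈ A} = μ0 + σ * sInf A := by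
  have hSne : {x : ℝ | (x - μ0)/σ ∈ A}.Nonempty := by
    obtain ⟨a, ha⟩ := hne
    have heq : (μ0 + σ * a - μ0)/σ = a := by field_simp; ring
    exact ⟨μ0 + σ * a, by simp only [Set.mem_setOf_eq, heq]; exact ha⟩
  apply IsGLB.csInf_eq _ hSne
  constructor
  · intro x hx
    have h1 : sInf A ≤ (x - μ0)/σ := csInf_le hbdd hx
    have := mul_le_mul_of_nonneg_left h1 hσ.le
    rw [mul_div_cancel₀] at this
    · linarith
    · exact hσ.ne'
  · intro bnd hbnd
    have h1 : ∀ a ∈ A, (bnd - μ0)/σ ≤ a := by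
      intro a ha
      have heq : (μ0 + σ * a - μ0)/σ = a := by field_simp; ring
      have : bnd ≤ μ0 + σ * a := hbnd (by simp only [Set.mem_setOf_eq, heq]; exact ha)
      rw [div_le_iff₀ hσ]; linarith
    have h2 : (bnd - μ0)/σ ≤ sInf A := le_csInf hne h1
    rw [div_le_iff₀ hσ] at h2
    linarith

end Aux

section VaRlemmas

open Real Filter

variable {Ω : Type*} [MeasurableSpace Ω] {P : Measure Ω} [IsProbabilityMeasure P] {Y : Ω → ℝ}

lemma var_affine (hY : Measurable Y) {β : ℝ} (hβ : β ∈ Set.Ioo (0:ℝ) 1)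
    (μ0 : ℝ) {σ0 : ℝ} (hσ : 0 ≤ σ0) :
    VaR P β (fun ω => μ0 + σ0 * Y ω) = μ0 + σ0 * VaR P β Y := by
  rcases eq_or_lt_of_le hσ with hσ0 | hσ0
  · -- degenerate case
    subst hσ0
    simp only [VaR, zero_mul, add_zero]
    have hset : {x : ℝ | 1 - β ≤ (P {ω | μ0 ≤ x}).toReal} = Set.Ici μ0 := by
      ext x
      simp only [Set.mem_setOf_eq, Set.mem_Ici]
      constructor
      · intro h
        by_contra hlt
        push_neg at hlt
        have : {ω | μ0 ≤ x} = (∅ : Set Ω) := by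
          ext ω; simp only [Set.mem_setOf_eq, Set.mem_empty_iff_false, iff_false, not_le]; exact hlt
        rw [this] at h
        simp only [measure_empty, ENNReal.toReal_zero] at h
        linarith [hβ.2]
      · intro h
        have : {ω | μ0 ≤ x} = (Set.univ : Set Ω) := by
          ext ω; simp [h]
        rw [this, measure_univ]
        simp only [ENNReal.toReal_one]
        linarith [hβ.1]
    rw [hset, csInf_Ici]
  · -- positive scaling
    have hA := cdf_set_nonempty (P := P) hY hβ.1
    have hB := cdf_set_bddBelow (P := P) hY hβ.2
    have hset : {x : ℝ | 1 - β ≤ (P {ω | μ0 + σ0 * Y ω ≤ x}).toReal}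
        = {x : ℝ | (x - μ0)/σ0 ∈ {y : ℝ | 1 - β ≤ (P {ω | Y ω ≤ y}).toReal}} := by
      ext x
      simp only [Set.mem_setOf_eq]
      have : {ω | μ0 + σ0 * Y ω ≤ x} = {ω | Y ω ≤ (x - μ0)/σ0} := by
        ext ω
        simp only [Set.mem_setOf_eq]
        rw [le_div_iff₀ hσ0]
        constructor <;> intro h <;> nlinarith
      rw [this]
    show sInf _ = _
    rw [hset, sInf_affine_set hA hB hσ0]
    rfl

end VaRlemmas

lemma sInf_insert_one {a : ℝ} (ha0 : 0 ≤ a) (ha1 : a ≤ 1) :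
    sInf (insert 1 {β : ℝ | β ∈ Set.Ioo (0:ℝ) 1 ∧ a ≤ β}) = a := by
  apply IsGLB.csInf_eq _ (Set.insert_nonempty _ _)
  constructor
  · rintro β hβ
    rcases Set.mem_insert_iff.mp hβ with rfl | ⟨_, hb⟩
    · exact ha1
    · exact hb
  · intro bnd hbnd
    by_contra hlt
    push_neg at hlt
    rcases eq_or_lt_of_le ha1 with h1 | h1
    · have := hbnd (Set.mem_insert 1 _)
      rw [← h1] at this
      linarith
    · set γ := min ((a + bnd)/2) ((a + 1)/2) with hγ
      have hγ1 : γ ≤ (a+1)/2 := min_le_right _ _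
      have hγ2 : γ ≤ (a+bnd)/2 := min_le_left _ _
      have hγa : a < γ := lt_min (by linarith) (by linarith)
      have hγmem : γ ∈ {β : ℝ | β ∈ Set.Ioo (0:ℝ) 1 ∧ a ≤ β} :=
        ⟨⟨lt_of_le_of_lt ha0 hγa, by linarith⟩, hγa.le⟩
      have := hbnd (Set.mem_insert_of_mem _ hγmem)
      linarith

/-- for an elliptically distributed portfolio `X ~ E_n(μ, Σ, τ)`,
`DQ^{VaR}_α(X) = (1 − F(k_Σ · VaR_α(Y)))/α`, where `Y ~ E_1(0,1,τ)` with CDF `F` and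
`k_Σ = (∑_i σ_i)/(∑_{i,j} σ_{ij})^{1/2}`. -/
theorem DQVaR_elliptical
    {Ω : Type*} [MeasurableSpace Ω] (P : Measure Ω) [IsProbabilityMeasure P]
    {n : ℕ} (X : Fin n → Ω → ℝ) (hXm : ∀ i, Measurable (X i))
    (μ : Fin n → ℝ) (M : Matrix (Fin n) (Fin n) ℝ) (τ : ℝ → ℂ)
    (hM : M.PosSemidef) (hM1 : 0 < ∑ i, ∑ j, M i j)
    -- `X ~ E_n(μ, Σ, τ)`: characteristic function identity
    (hchar : ∀ t : Fin n → ℝ,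
      (∫ ω, Complex.exp (Complex.I * ((∑ i, t i * X i ω : ℝ) : ℂ)) ∂P)
        = Complex.exp (Complex.I * ((∑ i, t i * μ i : ℝ) : ℂ))
          * τ (∑ i, ∑ j, t i * M i j * t j))
    -- `Y ~ E_1(0, 1, τ)`
    (Y : Ω → ℝ) (hYm : Measurable Y)
    (hcharY : ∀ t : ℝ,
      (∫ ω, Complex.exp (Complex.I * ((t * Y ω : ℝ) : ℂ)) ∂P) = τ (t ^ 2))
    (kSig : ℝ)
    (hk : kSig = (∑ i, Real.sqrt (M i i)) / Real.sqrt (∑ i, ∑ j, M i j))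
    (α : ℝ) (hα : α ∈ Set.Ioo (0:ℝ) 1) :
    DQVaR P α X = (1 - (P {ω | Y ω ≤ kSig * VaR P α Y}).toReal) / α := by
  -- notation
  set σ : Fin n → ℝ := fun i => Real.sqrt (M i i) with hσdef
  set c : ℝ := Real.sqrt (∑ i, ∑ j, M i j) with hcdef
  have hMdiag : ∀ i, 0 ≤ M i i := by
    intro i
    exact hM.diag_nonneg
  have hσnn : ∀ i, 0 ≤ σ i := fun i => Real.sqrt_nonneg _
  have hc : 0 < c := Real.sqrt_pos.mpr hM1
  -- characteristic function of affine functions of Y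
  have char_affine : ∀ (μ0 σ0 t : ℝ),
      ∫ ω, Complex.exp (Complex.I * ((t * (μ0 + σ0 * Y ω) : ℝ) : ℂ)) ∂P
        = Complex.exp (Complex.I * ((t * μ0 : ℝ) : ℂ)) * τ ((t * σ0) ^ 2) := by
    intro μ0 σ0 t
    have key : ∀ ω, Complex.exp (Complex.I * ((t * (μ0 + σ0 * Y ω) : ℝ) : ℂ))
        = Complex.exp (Complex.I * ((t * μ0 : ℝ) : ℂ))
          * Complex.exp (Complex.I * ((t * σ0 * Y ω : ℝ) : ℂ)) := by
      intro ω
      rw [← Complex.exp_add]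
      congr 1
      push_cast
      ring
    simp_rw [key]
    rw [MeasureTheory.integral_const_mul, hcharY (t * σ0)]
  -- CDFs of the marginals
  have cdfX : ∀ (i : Fin n) (x : ℝ),
      (P {ω | X i ω ≤ x}).toReal = (P {ω | μ i + σ i * Y ω ≤ x}).toReal := by
    intro i x
    apply cdf_eq_of_char P (X i) (fun ω => μ i + σ i * Y ω) (hXm i) (measurable_const.add (measurable_const.mul hYm))
    intro t
    have h1 := hchar (Pi.single i t)
    have e1 : ∀ ω, ∑ j, (Pi.single i t : Fin n → ℝ) j * X j ω = t * X i ω := by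
      intro ω; simp [Pi.single_apply, ite_mul, Finset.sum_ite_eq']
    have e2 : ∑ j, (Pi.single i t : Fin n → ℝ) j * μ j = t * μ i := by
      simp [Pi.single_apply, ite_mul, Finset.sum_ite_eq']
    have e3 : ∑ a, ∑ b, (Pi.single i t : Fin n → ℝ) a * M a b * (Pi.single i t : Fin n → ℝ) b
        = t * M i i * t := by
      simp [Pi.single_apply, ite_mul, mul_ite, mul_zero, zero_mul, Finset.sum_ite_eq,
        Finset.sum_ite_eq']
    simp_rw [e1, e2, e3] at h1
    rw [h1, char_affine (μ i) (σ i) t]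
    congr 2
    rw [mul_pow, hσdef]
    rw [Real.sq_sqrt (hMdiag i)]
    ring
  -- CDF of the sum
  have cdfS : ∀ x : ℝ,
      (P {ω | (∑ i, X i ω) ≤ x}).toReal
        = (P {ω | (∑ i, μ i) + c * Y ω ≤ x}).toReal := by
    intro x
    apply cdf_eq_of_char P (fun ω => ∑ i, X i ω) (fun ω => (∑ i, μ i) + c * Y ω) (Finset.measurable_sum Finset.univ fun i _ => hXm i)
      (measurable_const.add (measurable_const.mul hYm))
    intro t
    have h1 := hchar (fun _ => t)
    have e1 : ∀ ω, ∑ j, t * X j ω = t * ∑ j, X j ω := by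
      intro ω; rw [Finset.mul_sum]
    have e2 : ∑ j, t * μ j = t * ∑ j, μ j := by rw [Finset.mul_sum]
    have e3 : ∑ a, ∑ b, t * M a b * t = t ^ 2 * ∑ a, ∑ b, M a b := by
      have h : ∀ a b : Fin n, t * M a b * t = t ^ 2 * M a b := fun a b => by ring
      simp_rw [h, ← Finset.mul_sum]
    simp_rw [e1, e2, e3] at h1
    have h2 : (fun ω => Complex.exp (Complex.I * ((t * ∑ i, X i ω : ℝ) : ℂ)))
        = fun ω => Complex.exp (Complex.I * ((t * (∑ i, X i ω) : ℝ) : ℂ)) := rfl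
    rw [show (∫ ω, Complex.exp (Complex.I * ((t * (∑ i, X i ω) : ℝ) : ℂ)) ∂P)
        = Complex.exp (Complex.I * ((t * ∑ j, μ j : ℝ) : ℂ)) * τ (t ^ 2 * ∑ a, ∑ b, M a b)
      from h1]
    rw [char_affine (∑ i, μ i) c t]
    congr 2
    rw [mul_pow, hcdef, Real.sq_sqrt hM1.le]
  -- VaR of the marginals
  have varX : ∀ i, VaR P α (X i) = μ i + σ i * VaR P α Y := by
    intro i
    have hset : {x : ℝ | 1 - α ≤ (P {ω | X i ω ≤ x}).toReal}
        = {x : ℝ | 1 - α ≤ (P {ω | μ i + σ i * Y ω ≤ x}).toReal} := by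
      ext x; rw [Set.mem_setOf_eq, Set.mem_setOf_eq, cdfX i x]
    show sInf _ = _
    rw [hset]
    exact var_affine hYm hα (μ i) (hσnn i)
  -- VaR of the sum
  have varS : ∀ β : ℝ, β ∈ Set.Ioo (0:ℝ) 1 →
      VaR P β (fun ω => ∑ i, X i ω) = (∑ i, μ i) + c * VaR P β Y := by
    intro β hβ
    have hset : {x : ℝ | 1 - β ≤ (P {ω | (∑ i, X i ω) ≤ x}).toReal}
        = {x : ℝ | 1 - β ≤ (P {ω | (∑ i, μ i) + c * Y ω ≤ x}).toReal} := by
      ext x; rw [Set.mem_setOf_eq, Set.mem_setOf_eq, cdfS x]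
    show sInf _ = _
    rw [hset]
    exact var_affine hYm hβ (∑ i, μ i) hc.le
  -- the quantity q
  set q : ℝ := kSig * VaR P α Y with hq
  set a : ℝ := 1 - (P {ω | Y ω ≤ q}).toReal with ha
  have ha0 : 0 ≤ a := by
    rw [ha]; linarith [cdf_le_one (P := P) (Y := Y) q]
  have ha1 : a ≤ 1 := by
    rw [ha]; linarith [cdf_nonneg (P := P) (Y := Y) q]
  -- rewrite the defining set of DQVaR
  have hsum : ∑ i, VaR P α (X i) = (∑ i, μ i) + (∑ i, σ i) * VaR P α Y := by
    rw [Finset.sum_congr rfl fun i _ => varX i, Finset.sum_add_distrib, Finset.sum_mul]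
  have hsetDQ : {β : ℝ | β ∈ Set.Ioo (0:ℝ) 1 ∧
      VaR P β (fun ω => ∑ i, X i ω) ≤ ∑ i, VaR P α (X i)}
      = {β : ℝ | β ∈ Set.Ioo (0:ℝ) 1 ∧ a ≤ β} := by
    ext β
    simp only [Set.mem_setOf_eq]
    refine and_congr_right fun hβ => ?_
    rw [varS β hβ, hsum]
    have hcond : (∑ i, μ i) + c * VaR P β Y ≤ (∑ i, μ i) + (∑ i, σ i) * VaR P α Y
        ↔ VaR P β Y ≤ q := by
      rw [hq, hk]
      constructor
      · intro h
        rw [div_mul_eq_mul_div, le_div_iff₀ hc]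
        nlinarith
      · intro h
        rw [div_mul_eq_mul_div, le_div_iff₀ hc] at h
        nlinarith
    rw [hcond]
    have := var_le_iff (P := P) hYm hβ q
    show VaR P β Y ≤ q ↔ _
    rw [VaR, this, ha]
    constructor <;> intro <;> linarith
  rw [DQVaR, hsetDQ, sInf_insert_one ha0 ha1, ha, hq]
end

section
/- For every integrable real random variable X and every α ∈ (0,1), there exists exactly one t ∈ ℝ satisfying (1−α) E[(X−t)_+] = α E[(X−t)_−]. -/
open MeasureTheory

/-- For every integrable real random variable `X` on a probability space and every
`α ∈ (0,1)`, there is exactly one `t ∈ ℝ` with `(1−α) E[(X−t)₊] = α E[(X−t)₋]`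
(the expectile of `X` at level `α`). -/
theorem expectile_existsUnique
    {Ω : Type*} [MeasurableSpace Ω] (P : Measure Ω) [IsProbabilityMeasure P]
    (X : Ω → ℝ) (hXm : Measurable X) (hXint : Integrable X P)
    (α : ℝ) (hα : α ∈ Set.Ioo (0:ℝ) 1) :
    ∃! t : ℝ,
      (1 - α) * ∫ ω, max (X ω - t) 0 ∂P = α * ∫ ω, max (t - X ω) 0 ∂P := by
  obtain ⟨hα0, hα1⟩ := hα
  have hip : ∀ t : ℝ, Integrable (fun ω => max (X ω - t) 0) P := fun t =>
    (hXint.sub (integrable_const t)).pos_part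
  have him : ∀ t : ℝ, Integrable (fun ω => max (t - X ω) 0) P := fun t =>
    ((integrable_const t).sub hXint).pos_part
  set μ := ∫ ω, X ω ∂P with hμ
  set fp : ℝ → ℝ := fun t => ∫ ω, max (X ω - t) 0 ∂P with hfp
  set fm : ℝ → ℝ := fun t => ∫ ω, max (t - X ω) 0 ∂P with hfm
  set g : ℝ → ℝ := fun t => (1 - α) * fp t - α * fm t with hg
  -- the key identity : fp t - fm t = μ - t
  have hid : ∀ t : ℝ, fp t - fm t = μ - t := by
    intro t
    have h1 : fp t - fm t = ∫ ω, (max (X ω - t) 0 - max (t - X ω) 0) ∂P :=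
      (integral_sub (hip t) (him t)).symm
    have h2 : ∀ ω, max (X ω - t) 0 - max (t - X ω) 0 = X ω - t := by
      intro ω
      rcases le_total (X ω) t with h | h
      · rw [max_eq_right (by linarith), max_eq_left (by linarith)]; ring
      · rw [max_eq_left (by linarith), max_eq_right (by linarith)]; ring
    have h3 : ∫ ω, (X ω - t) ∂P = μ - t := by
      rw [integral_sub hXint (integrable_const t), integral_const]
      simp [hμ]
    rw [h1]
    calc ∫ ω, (max (X ω - t) 0 - max (t - X ω) 0) ∂P
        = ∫ ω, (X ω - t) ∂P := by exact integral_congr_ae (Filter.Eventually.of_forall h2)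
      _ = μ - t := h3
  set c : ℝ := min α (1 - α) with hcdef
  have hc : 0 < c := lt_min hα0 (by linarith)
  -- key monotonicity estimates
  have key : ∀ s t : ℝ, s ≤ t → c * (t - s) ≤ g s - g t ∧ g s - g t ≤ t - s := by
    intro s t hst
    have hA : 0 ≤ fp s - fp t := by
      have : fp t ≤ fp s :=
        integral_mono (hip t) (hip s) fun ω => max_le_max (by linarith) le_rfl
      linarith
    have hB : 0 ≤ fm t - fm s := by
      have : fm s ≤ fm t :=
        integral_mono (him s) (him t) fun ω => max_le_max (by linarith) le_rfl
      linarith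
    have hAB : (fp s - fp t) + (fm t - fm s) = t - s := by
      have h1 := hid s
      have h2 := hid t
      linarith
    have hgd : g s - g t = (1 - α) * (fp s - fp t) + α * (fm t - fm s) := by
      simp only [hg]; ring
    have h1 : c * (fp s - fp t) ≤ (1 - α) * (fp s - fp t) :=
      mul_le_mul_of_nonneg_right (min_le_right _ _) hA
    have h2 : c * (fm t - fm s) ≤ α * (fm t - fm s) :=
      mul_le_mul_of_nonneg_right (min_le_left _ _) hB
    have h3 : (1 - α) * (fp s - fp t) ≤ 1 * (fp s - fp t) :=
      mul_le_mul_of_nonneg_right (by linarith) hA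
    have h4 : α * (fm t - fm s) ≤ 1 * (fm t - fm s) :=
      mul_le_mul_of_nonneg_right (by linarith) hB
    constructor
    · have : c * (t - s) = c * (fp s - fp t) + c * (fm t - fm s) := by
        rw [← mul_add, hAB]
      linarith
    · linarith
  -- continuity of g
  have hcont : Continuous g := by
    have hlip : LipschitzWith 1 g := by
      apply LipschitzWith.of_dist_le_mul
      intro s t
      simp only [Real.dist_eq, NNReal.coe_one, one_mul]
      rcases le_total s t with h | h
      · obtain ⟨h1, h2⟩ := key s t h
        have hcs : 0 ≤ c * (t - s) := mul_nonneg hc.le (by linarith)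
        have habs : |s - t| = t - s := by
          rw [abs_of_nonpos (by linarith)]; ring
        rw [habs, abs_le]; constructor <;> linarith
      · obtain ⟨h1, h2⟩ := key t s h
        have hcs : 0 ≤ c * (s - t) := mul_nonneg hc.le (by linarith)
        have habs : |s - t| = s - t := abs_of_nonneg (by linarith)
        rw [habs, abs_le]; constructor <;> linarith
    exact hlip.continuous
  -- existence of a root via IVT
  set t0 : ℝ := |g 0| / c + 1 with ht0def
  have ht0pos : 0 < t0 := by positivity
  have hct0 : c * t0 = |g 0| + c := by
    rw [ht0def, mul_add, mul_one, mul_div_cancel₀ _ hc.ne']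
  have hgt0 : g t0 ≤ -c := by
    obtain ⟨h1, _⟩ := key 0 t0 ht0pos.le
    have := abs_nonneg (g 0)
    have := le_abs_self (g 0)
    simp only [sub_zero] at h1
    linarith [hct0]
  have hgs0 : c ≤ g (-t0) := by
    obtain ⟨h1, _⟩ := key (-t0) 0 (by linarith)
    have := neg_abs_le (g 0)
    have h0 : c * (0 - -t0) = |g 0| + c := by rw [sub_neg_eq_add, zero_add, hct0]
    linarith
  have hmem : (0 : ℝ) ∈ Set.Icc (g t0) (g (-t0)) := ⟨by linarith, by linarith⟩
  have hsub := intermediate_value_Icc' (show -t0 ≤ t0 by linarith) hcont.continuousOn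
  obtain ⟨t, _, htval⟩ := hsub hmem
  refine ⟨t, ?_, ?_⟩
  · have : (1 - α) * fp t - α * fm t = 0 := htval
    have := sub_eq_zero.mp this
    exact this
  · intro y hy
    have hgy : g y = 0 := by
      have : (1 - α) * fp y - α * fm y = 0 := sub_eq_zero.mpr hy
      exact this
    by_contra hne
    rcases lt_or_gt_of_ne hne with h | h
    · obtain ⟨h1, _⟩ := key y t h.le
      have : 0 < c * (t - y) := mul_pos hc (by linarith)
      rw [hgy, htval] at h1
      linarith
    · obtain ⟨h1, _⟩ := key t y h.le
      have : 0 < c * (y - t) := mul_pos hc (by linarith)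
      rw [hgy, htval] at h1
      linarith
end
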